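/- arXiv:2003.00894 — 12 statements merged into one kernel-verified Lean document; each statement's English description precedes it below -/
import Mathlib

section
/- A metric space (Ω,d) has Nagata dimension ≤ δ on the scale s ∈ (0,∞] if and only if for every x ∈ Ω, every r < s, and every sequence of δ+2 points x₁,…,x_{δ+2} in the closed ball of radius r around x, there exist indices i ≠ j such that d(x_i, x_j) ≤ max{d(x, x_i), d(x, x_j)}. -/
open Metric ENNReal

/-- A finite family of closed balls in `Ω`, given as (centre, radius) pairs,
has multiplicity `≤ m`: every point of `Ω` belongs to at most `m` members. -/
def BallMultLE {Ω : Type*} [MetricSpace Ω] (γ : Finset (Ω × ℝ)) (m : ℕ) : Prop :=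
  ∀ y : Ω, (γ.filter fun p => dist y p.1 ≤ p.2).card ≤ m

/-- `Ω` has Nagata dimension `≤ δ` on the scale `s ∈ (0,∞]`: every finite family of
closed balls of radii `< s` admits a subfamily of multiplicity `≤ δ + 1` covering
all the centres of the original family. -/
def NagataDimLE (Ω : Type*) [MetricSpace Ω] (δ : ℕ) (s : ℝ≥0∞) : Prop :=
  ∀ γ : Finset (Ω × ℝ), (∀ p ∈ γ, 0 ≤ p.2 ∧ ENNReal.ofReal p.2 < s) →
    ∃ γ' ⊆ γ, BallMultLE γ' (δ + 1) ∧ ∀ p ∈ γ, ∃ q ∈ γ', dist p.1 q.1 ≤ q.2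

open Classical in
/-- Greedy selection: process the list from the tail (largest radii first when the
list is sorted by increasing radius), keeping a ball iff its centre is not yet
covered by a previously kept ball. -/
noncomputable def greedyBalls {Ω : Type*} [MetricSpace Ω] : List (Ω × ℝ) → List (Ω × ℝ)
  | [] => []
  | p :: l =>
    if ∃ q ∈ greedyBalls l, dist p.1 q.1 ≤ q.2 then greedyBalls l else p :: greedyBalls l

lemma greedyBalls_sublist {Ω : Type*} [MetricSpace Ω] (l : List (Ω × ℝ)) :
    List.Sublist (greedyBalls l) l := by
  induction l with
  | nil => simp [greedyBalls]
  | cons p l ih =>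
    rw [greedyBalls]
    split
    · exact ih.cons p
    · exact ih.cons₂ p

lemma greedyBalls_cover {Ω : Type*} [MetricSpace Ω] (l : List (Ω × ℝ))
    (h0 : ∀ p ∈ l, 0 ≤ p.2) :
    ∀ p ∈ l, ∃ q ∈ greedyBalls l, dist p.1 q.1 ≤ q.2 := by
  induction l with
  | nil => simp
  | cons a l ih =>
    intro p hp
    have h0' : ∀ p ∈ l, 0 ≤ p.2 := fun q hq => h0 q (List.mem_cons_of_mem _ hq)
    rw [greedyBalls]
    split
    case isTrue h =>
      rcases List.mem_cons.1 hp with rfl | hp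
      · exact h
      · exact ih h0' p hp
    case isFalse h =>
      rcases List.mem_cons.1 hp with rfl | hp
      · exact ⟨p, List.mem_cons_self, by simpa using h0 p List.mem_cons_self⟩
      · obtain ⟨q, hq, hd⟩ := ih h0' p hp
        exact ⟨q, List.mem_cons_of_mem _ hq, hd⟩

lemma greedyBalls_sep {Ω : Type*} [MetricSpace Ω] (l : List (Ω × ℝ))
    (hl : l.Pairwise (fun p q : Ω × ℝ => p.2 ≤ q.2)) :
    ∀ p ∈ greedyBalls l, ∀ q ∈ greedyBalls l, p ≠ q → max p.2 q.2 < dist p.1 q.1 := by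
  induction l with
  | nil => simp [greedyBalls]
  | cons a l ih =>
    have ha : ∀ q ∈ l, a.2 ≤ q.2 := (List.pairwise_cons.1 hl).1
    have hl' : l.Pairwise (fun p q : Ω × ℝ => p.2 ≤ q.2) := (List.pairwise_cons.1 hl).2
    intro p hp q hq hne
    rw [greedyBalls] at hp hq
    by_cases hc : ∃ q ∈ greedyBalls l, dist a.1 q.1 ≤ q.2
    · rw [if_pos hc] at hp hq
      exact ih hl' p hp q hq hne
    · rw [if_neg hc] at hp hq
      push_neg at hc
      rcases List.mem_cons.1 hp with rfl | hp1 <;> rcases List.mem_cons.1 hq with rfl | hq1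
      · exact absurd rfl hne
      · have h1 := hc q hq1
        have h2 : p.2 ≤ q.2 := ha q ((greedyBalls_sublist l).subset hq1)
        rw [max_eq_right h2]; exact h1
      · have h1 := hc p hp1
        have h2 : q.2 ≤ p.2 := ha p ((greedyBalls_sublist l).subset hp1)
        rw [max_eq_left h2, dist_comm]; exact h1
      · exact ih hl' p hp1 q hq1 hne

/-- A metric space has Nagata dimension `≤ δ` on the scale `s` iff among any
`δ + 2` points of a closed ball of radius `r < s` around `x`, two distinct indices
`i ≠ j` satisfy `d(xᵢ, xⱼ) ≤ max {d(x, xᵢ), d(x, xⱼ)}`. -/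
theorem nagataDimLE_iff {Ω : Type*} [MetricSpace Ω] (δ : ℕ) (s : ℝ≥0∞) (hs : 0 < s) :
    NagataDimLE Ω δ s ↔
      ∀ (x : Ω) (r : ℝ), 0 ≤ r → ENNReal.ofReal r < s →
        ∀ f : Fin (δ + 2) → Ω, (∀ i, f i ∈ closedBall x r) →
          ∃ i j, i ≠ j ∧ dist (f i) (f j) ≤ max (dist x (f i)) (dist x (f j)) := by
  constructor
  · -- forward direction
    intro H x r hr0 hrs f hf
    by_cases hinj : Function.Injective f
    · classical
      set γ : Finset (Ω × ℝ) := Finset.univ.image fun i => (f i, dist x (f i)) with hγdef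
      have hcard : γ.card = δ + 2 := by
        rw [Finset.card_image_of_injective _ (fun i j h => hinj (congrArg Prod.fst h)),
          Finset.card_univ, Fintype.card_fin]
      obtain ⟨γ', hsub, hmult, hcov⟩ := H γ (by
        rintro p hp
        obtain ⟨i, -, rfl⟩ := Finset.mem_image.1 hp
        refine ⟨dist_nonneg, lt_of_le_of_lt ?_ hrs⟩
        exact ENNReal.ofReal_le_ofReal (by simpa [dist_comm] using hf i))
      have hx : ∀ q ∈ γ', dist x q.1 ≤ q.2 := by
        intro q hq
        obtain ⟨i, -, rfl⟩ := Finset.mem_image.1 (hsub hq)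
        exact le_refl _
      have hcard' : γ'.card ≤ δ + 1 := by
        have h := hmult x
        rwa [Finset.filter_true_of_mem hx] at h
      have hex : ∃ p ∈ γ, p ∉ γ' := by
        by_contra h
        push_neg at h
        have := Finset.card_le_card (fun p hp => h p hp)
        omega
      obtain ⟨p, hp, hp'⟩ := hex
      obtain ⟨i, -, rfl⟩ := Finset.mem_image.1 hp
      obtain ⟨q, hq, hd⟩ := hcov _ hp
      obtain ⟨j, -, rfl⟩ := Finset.mem_image.1 (hsub hq)
      refine ⟨i, j, ?_, hd.trans (le_max_right _ _)⟩
      rintro rfl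
      exact hp' hq
    · rw [Function.not_injective_iff] at hinj
      obtain ⟨i, j, hij, hne⟩ := hinj
      exact ⟨i, j, hne, by rw [hij, dist_self]; exact le_max_of_le_left dist_nonneg⟩
  · -- backward direction
    intro H γ hγ
    classical
    set l : List (Ω × ℝ) := γ.toList.mergeSort (fun p q => decide (p.2 ≤ q.2)) with hldef
    have hmem : ∀ p, p ∈ l ↔ p ∈ γ := by
      intro p
      rw [hldef, List.mem_mergeSort, Finset.mem_toList]
    have hsorted : l.Pairwise (fun p q : Ω × ℝ => p.2 ≤ q.2) := by
      have h := List.pairwise_mergeSort (le := fun p q : Ω × ℝ => decide (p.2 ≤ q.2))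
        (by intro a b c hab hbc; simp only [decide_eq_true_iff] at *; exact hab.trans hbc)
        (fun (a b : Ω × ℝ) => by simpa [decide_eq_true_iff] using le_total a.2 b.2) γ.toList
      rw [← hldef] at h
      exact h.imp (by simp)
    refine ⟨(greedyBalls l).toFinset, ?_, ?_, ?_⟩
    · intro p hp
      rw [List.mem_toFinset] at hp
      exact (hmem p).1 ((greedyBalls_sublist l).subset hp)
    · -- multiplicity
      intro y
      by_contra hlt
      push_neg at hlt
      obtain ⟨T, hT, hTcard⟩ := Finset.exists_subset_card_eq hlt
      set g : Fin (δ + 2) → Ω × ℝ := fun i => ((T.equivFinOfCardEq hTcard).symm i : Ω × ℝ)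
        with hgdef
      have hginj : Function.Injective g :=
        Subtype.val_injective.comp (T.equivFinOfCardEq hTcard).symm.injective
      have hgT : ∀ i, g i ∈ T := fun i => ((T.equivFinOfCardEq hTcard).symm i).2
      have hgF : ∀ i, g i ∈ (greedyBalls l).toFinset ∧ dist y (g i).1 ≤ (g i).2 := by
        intro i
        have := hT (hgT i)
        rw [Finset.mem_filter] at this
        exact this
      have hgγ : ∀ i, g i ∈ γ := fun i => by
        have := (hgF i).1
        rw [List.mem_toFinset] at this
        exact (hmem _).1 ((greedyBalls_sublist l).subset this)
      set r : ℝ := Finset.univ.sup' Finset.univ_nonempty (fun i => (g i).2) with hrdef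
      obtain ⟨i₀, -, hi₀⟩ := Finset.exists_mem_eq_sup' Finset.univ_nonempty
        (fun i : Fin (δ + 2) => (g i).2)
      have hr0 : 0 ≤ r := by rw [hrdef, hi₀]; exact (hγ _ (hgγ i₀)).1
      have hrs : ENNReal.ofReal r < s := by rw [hrdef, hi₀]; exact (hγ _ (hgγ i₀)).2
      have hrle : ∀ i, (g i).2 ≤ r := fun i =>
        Finset.le_sup' (fun i => (g i).2) (Finset.mem_univ i)
      obtain ⟨i, j, hij, hd⟩ := H y r hr0 hrs (fun i => (g i).1) (fun i => by
        rw [mem_closedBall, dist_comm]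
        exact ((hgF i).2).trans (hrle i))
      have hsep : max (g i).2 (g j).2 < dist (g i).1 (g j).1 := by
        refine greedyBalls_sep l hsorted _ ?_ _ ?_ (fun h => hij (hginj h))
        · exact List.mem_toFinset.1 (hgF i).1
        · exact List.mem_toFinset.1 (hgF j).1
      have : max (dist y (g i).1) (dist y (g j).1) ≤ max (g i).2 (g j).2 :=
        max_le_max (hgF i).2 (hgF j).2
      exact absurd (hd.trans this) (not_le.2 hsep)
    · -- covering
      intro p hp
      obtain ⟨q, hq, hd⟩ := greedyBalls_cover l
        (fun q hq => (hγ q ((hmem q).1 hq)).1) p ((hmem p).2 hp)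
      exact ⟨q, List.mem_toFinset.2 hq, hd⟩
end

section
/- A metric space Ω has Nagata dimension 0 on the scale +∞ (i.e., every finite family of closed balls admits a subfamily of multiplicity ≤ 1 covering all centres) if and only if the metric is an ultrametric, i.e., satisfies d(x,z) ≤ max{d(x,y), d(y,z)} for all x,y,z. -/
open Metric ENNReal

open Classical in
private lemma ultra_aux {Ω : Type*} [MetricSpace Ω]
    (hu : ∀ x y z : Ω, dist x z ≤ max (dist x y) (dist y z)) :
    ∀ γ : Finset (Ω × ℝ), (∀ p ∈ γ, 0 ≤ p.2) →
      ∃ γ' ⊆ γ, BallMultLE γ' 1 ∧ ∀ p ∈ γ, ∃ q ∈ γ', dist p.1 q.1 ≤ q.2 := by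
  intro γ
  induction γ using Finset.strongInduction with
  | _ γ ih =>
    intro hγ
    rcases γ.eq_empty_or_nonempty with rfl | hne
    · exact ⟨∅, Finset.Subset.refl _, fun y => by simp, by simp⟩
    obtain ⟨p, hp, hpmax⟩ := γ.exists_max_image Prod.snd hne
    set γ₀ := γ.filter (fun q => ¬ ∃ w : Ω, dist w p.1 ≤ p.2 ∧ dist w q.1 ≤ q.2) with hγ₀
    have hpnot : p ∉ γ₀ := by
      simp only [hγ₀, Finset.mem_filter, not_and, not_not]
      intro _
      exact ⟨p.1, by simp [hγ p hp], by simp [hγ p hp]⟩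
    have hss : γ₀ ⊂ γ := ⟨Finset.filter_subset _ _, fun hsub => hpnot (hsub hp)⟩
    obtain ⟨γ'₀, hsub0, hmult0, hcov0⟩ :=
      ih γ₀ hss (fun q hq => hγ q (Finset.filter_subset _ _ hq))
    refine ⟨insert p γ'₀, ?_, ?_, ?_⟩
    · intro q hq
      rcases Finset.mem_insert.1 hq with rfl | hq
      · exact hp
      · exact Finset.filter_subset _ _ (hsub0 hq)
    · intro y
      by_cases hy : dist y p.1 ≤ p.2
      · have hempty : γ'₀.filter (fun q => dist y q.1 ≤ q.2) = ∅ := by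
          rw [Finset.filter_eq_empty_iff]
          intro q hq hyq
          have hmem := hsub0 hq
          rw [hγ₀, Finset.mem_filter] at hmem
          exact hmem.2 ⟨y, hy, hyq⟩
        have heq : (insert p γ'₀).filter (fun q => dist y q.1 ≤ q.2)
            = insert p (γ'₀.filter (fun q => dist y q.1 ≤ q.2)) := by
          rw [Finset.filter_insert, if_pos hy]
        rw [heq, hempty]
        simp
      · have heq : (insert p γ'₀).filter (fun q => dist y q.1 ≤ q.2)
            = γ'₀.filter (fun q => dist y q.1 ≤ q.2) := by
          rw [Finset.filter_insert, if_neg hy]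
        rw [heq]; exact hmult0 y
    · intro q hq
      by_cases hq0 : q ∈ γ₀
      · obtain ⟨r, hr, hdr⟩ := hcov0 q hq0
        exact ⟨r, Finset.mem_insert_of_mem hr, hdr⟩
      · refine ⟨p, Finset.mem_insert_self _ _, ?_⟩
        rw [hγ₀, Finset.mem_filter, not_and, not_not] at hq0
        obtain ⟨w, hw1, hw2⟩ := hq0 hq
        calc dist q.1 p.1 ≤ max (dist q.1 w) (dist w p.1) := hu _ _ _
          _ ≤ p.2 := max_le (by rw [dist_comm]; exact hw2.trans (hpmax q hq)) hw1

/-- A metric space has Nagata dimension `0` on the scale `+∞` if and only if its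
metric is an ultrametric (non-archimedean). -/
theorem nagataDimLE_zero_top_iff_ultrametric (Ω : Type*) [MetricSpace Ω] :
    NagataDimLE Ω 0 ⊤ ↔ ∀ x y z : Ω, dist x z ≤ max (dist x y) (dist y z) := by
  classical
  constructor
  · intro h x y z
    by_contra hlt
    push_neg at hlt
    have hxz : x ≠ z := by
      intro he
      rw [he] at hlt
      simp at hlt
      exact absurd hlt.2 (not_lt.2 dist_nonneg)
    obtain ⟨γ', hsub, hmult, hcov⟩ := h {(x, dist x y), (z, dist y z)}
      (by
        intro p hp
        simp only [Finset.mem_insert, Finset.mem_singleton] at hp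
        rcases hp with rfl | rfl <;> exact ⟨dist_nonneg, by simp⟩)
    obtain ⟨q, hq, hdq⟩ := hcov (x, dist x y) (by simp)
    obtain ⟨q', hq', hdq'⟩ := hcov (z, dist y z) (by simp)
    have hq1 : q = (x, dist x y) := by
      have := hsub hq
      simp only [Finset.mem_insert, Finset.mem_singleton] at this
      rcases this with rfl | rfl
      · rfl
      · exact absurd hdq (by simp; exact lt_of_le_of_lt (le_max_right _ _) hlt)
    have hq'1 : q' = (z, dist y z) := by
      have := hsub hq'
      simp only [Finset.mem_insert, Finset.mem_singleton] at this
      rcases this with rfl | rfl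
      · exact absurd hdq' (by
          simp only [not_le]
          rw [dist_comm z x]
          exact lt_of_le_of_lt (le_max_left _ _) hlt)
      · rfl
    subst hq1; subst hq'1
    have h1 : (x, dist x y) ∈ γ'.filter (fun p => dist y p.1 ≤ p.2) := by
      simp only [Finset.mem_filter]
      exact ⟨hq, by simp [dist_comm]⟩
    have h2 : (z, dist y z) ∈ γ'.filter (fun p => dist y p.1 ≤ p.2) := by
      simp only [Finset.mem_filter]
      exact ⟨hq', le_refl _⟩
    have hne : ((x, dist x y) : Ω × ℝ) ≠ (z, dist y z) := by
      intro he
      exact hxz (congrArg Prod.fst he)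
    have hcard : 2 ≤ (γ'.filter (fun p => dist y p.1 ≤ p.2)).card := by
      have : ({(x, dist x y), (z, dist y z)} : Finset (Ω × ℝ))
          ⊆ γ'.filter (fun p => dist y p.1 ≤ p.2) := by
        intro r hr
        simp only [Finset.mem_insert, Finset.mem_singleton] at hr
        rcases hr with rfl | rfl
        · exact h1
        · exact h2
      calc 2 = ({(x, dist x y), (z, dist y z)} : Finset (Ω × ℝ)).card := by
              rw [Finset.card_insert_of_notMem (by simpa using hne)]; simp
        _ ≤ _ := Finset.card_le_card this
    have := hmult y
    omega
  · intro hu γ hγ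
    exact ultra_aux hu γ (fun p hp => (hγ p hp).1)
end

section
/- Stone's geometric lemma for ℝ^d: there is a constant C = C(d) such that for any finite sample x₁,…,x_n in ℝ^d, any point x ∈ ℝ^d, and any k ∈ ℕ₊, the number of indices i with x_i ≠ x such that x is among the k nearest neighbours of x_i inside the modified sample x₁,…,x_{i−1},x,x_{i+1},…,x_n (for any tie-breaking strategy) is at most Ck. -/
open Finset
open scoped Classical
open scoped RealInnerProductSpace

/-- Cone geometry: if the directions of `v` and `w` both lie in a ball of radius `1/2`
around `u`, and `‖v‖ ≤ ‖w‖` with `v ≠ 0`, then `v` is strictly closer to `w` than `0` is. -/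
lemma stone_cone_lemma {E : Type*} [NormedAddCommGroup E] [InnerProductSpace ℝ E]
    {u v w : E} (hv : v ≠ 0)
    (hvu : ‖v‖⁻¹ • v ∈ Metric.ball u (1/2)) (hwu : ‖w‖⁻¹ • w ∈ Metric.ball u (1/2))
    (hle : ‖v‖ ≤ ‖w‖) : ‖v - w‖ < ‖w‖ := by
  have hvn : 0 < ‖v‖ := norm_pos_iff.2 hv
  have hwn : 0 < ‖w‖ := lt_of_lt_of_le hvn hle
  set a := ‖v‖⁻¹ • v with ha_def
  set b := ‖w‖⁻¹ • w with hb_def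
  rw [Metric.mem_ball] at hvu hwu
  have hab : ‖a - b‖ < 1 := by
    calc ‖a - b‖ = dist a b := (dist_eq_norm _ _).symm
      _ ≤ dist a u + dist u b := dist_triangle _ _ _
      _ < 1/2 + 1/2 := add_lt_add hvu (by rwa [dist_comm])
      _ = 1 := by norm_num
  have ha : ‖a‖ = 1 := by
    rw [ha_def, norm_smul, norm_inv, norm_norm, inv_mul_cancel₀ hvn.ne']
  have hb : ‖b‖ = 1 := by
    rw [hb_def, norm_smul, norm_inv, norm_norm, inv_mul_cancel₀ hwn.ne']
  have hsqab := @norm_sub_sq_real E _ _ a b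
  have hinner : (1:ℝ)/2 < ⟪a, b⟫ := by
    have h2 : ‖a - b‖^2 < 1 := by nlinarith [norm_nonneg (a - b)]
    rw [ha, hb] at hsqab
    nlinarith
  have hva : v = ‖v‖ • a := by
    rw [ha_def, smul_smul, mul_inv_cancel₀ hvn.ne', one_smul]
  have hwb : w = ‖w‖ • b := by
    rw [hb_def, smul_smul, mul_inv_cancel₀ hwn.ne', one_smul]
  have hinnervw : ⟪v, w⟫ = ‖v‖ * ‖w‖ * ⟪a, b⟫ := by
    conv_lhs => rw [hva, hwb]
    rw [real_inner_smul_left, real_inner_smul_right]; ring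
  have hsq := @norm_sub_sq_real E _ _ v w
  have h4 : ‖v‖ * ‖v‖ ≤ ‖v‖ * ‖w‖ := mul_le_mul_of_nonneg_left hle hvn.le
  have h5 : ‖v‖ * ‖w‖ < 2 * (‖v‖ * ‖w‖) * ⟪a, b⟫ := by nlinarith [mul_pos hvn hwn]
  have hlt : ‖v - w‖^2 < ‖w‖^2 := by nlinarith
  nlinarith [norm_nonneg (v - w)]

/-- Stone's geometric lemma for `ℝ^d`: there is a constant `C = C(d)` such that for
every finite sample `x₁, …, xₙ` in `ℝ^d`, every point `x`, and every `k ≥ 1`, the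
number of indices `i` with `xᵢ ≠ x` such that `x` can be among the `k` nearest
neighbours of `xᵢ` in the sample `x₁, …, x_{i-1}, x, x_{i+1}, …, xₙ` (under some,
i.e. any, tie-breaking: strictly fewer than `k` sample points other than `x`
lie strictly closer to `xᵢ` than `x` does) is at most `C * k`. -/
theorem stone_geometric_lemma_euclidean (d : ℕ) :
    ∃ C : ℕ, ∀ (n : ℕ) (xs : Fin n → EuclideanSpace ℝ (Fin d))
      (x : EuclideanSpace ℝ (Fin d)) (k : ℕ), 0 < k →
      (univ.filter fun i : Fin n =>
          xs i ≠ x ∧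
            (univ.filter fun j : Fin n =>
                j ≠ i ∧ dist (xs j) (xs i) < dist x (xs i)).card < k).card
        ≤ C * k := by
  set E := EuclideanSpace ℝ (Fin d)
  have hcomp : IsCompact (Metric.sphere (0:E) 1) := isCompact_sphere 0 1
  obtain ⟨t, -, hcov⟩ := hcomp.elim_nhds_subcover (fun u => Metric.ball u (1/2))
    (fun u _ => Metric.ball_mem_nhds u (by norm_num))
  refine ⟨t.card, ?_⟩
  intro n xs x k hk
  set P : Fin n → Prop := fun i => xs i ≠ x ∧
      (univ.filter fun j : Fin n => j ≠ i ∧ dist (xs j) (xs i) < dist x (xs i)).card < k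
    with hP
  set A : E → Finset (Fin n) := fun u => univ.filter fun i =>
      P i ∧ ‖xs i - x‖⁻¹ • (xs i - x) ∈ Metric.ball u (1/2) with hA
  have hsub : (univ.filter P) ⊆ t.biUnion A := by
    intro i hi
    rw [mem_filter] at hi
    have hPi : P i := hi.2
    have hne : xs i - x ≠ 0 := sub_ne_zero.2 hPi.1
    have hmem : ‖xs i - x‖⁻¹ • (xs i - x) ∈ Metric.sphere (0:E) 1 := by
      simp [norm_smul, inv_mul_cancel₀ (norm_ne_zero_iff.2 hne)]
    obtain ⟨u, hu, hball⟩ := Set.mem_iUnion₂.1 (hcov hmem)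
    exact mem_biUnion.2 ⟨u, hu, mem_filter.2 ⟨mem_univ _, hPi, hball⟩⟩
  have hcard : ∀ u, (A u).card ≤ k := by
    intro u
    rcases (A u).eq_empty_or_nonempty with h | h
    · simp [h, hk.le]
    obtain ⟨i, hi, hmax⟩ := Finset.exists_max_image (A u) (fun j => ‖xs j - x‖) h
    have hiA := mem_filter.1 hi
    have hPi : P i := hiA.2.1
    have hsub2 : (A u).erase i ⊆
        univ.filter fun j : Fin n => j ≠ i ∧ dist (xs j) (xs i) < dist x (xs i) := by
      intro j hj
      rw [mem_erase] at hj
      have hjA := mem_filter.1 hj.2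
      have hPj : P j := hjA.2.1
      refine mem_filter.2 ⟨mem_univ _, hj.1, ?_⟩
      have hnej : xs j - x ≠ 0 := sub_ne_zero.2 hPj.1
      have hkey := stone_cone_lemma hnej hjA.2.2 hiA.2.2 (hmax j hj.2)
      have : (xs j - x) - (xs i - x) = xs j - xs i := by abel
      rw [this] at hkey
      rwa [dist_eq_norm, dist_eq_norm, norm_sub_rev x (xs i)]
    have h1 : ((A u).erase i).card ≤
        (univ.filter fun j : Fin n =>
          j ≠ i ∧ dist (xs j) (xs i) < dist x (xs i)).card := card_le_card hsub2
    have h2 := hPi.2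
    have h3 := Finset.card_erase_add_one hi
    omega
  calc (univ.filter P).card ≤ (t.biUnion A).card := card_le_card hsub
    _ ≤ ∑ u ∈ t, (A u).card := card_biUnion_le
    _ ≤ ∑ u ∈ t, k := Finset.sum_le_sum fun u _ => hcard u
    _ = t.card * k := by rw [Finset.sum_const, smul_eq_mul]
end

section
/- In any inner product space, if x, y, and z are points such that the angle at x between the vectors y − x and z − x is strictly less than π/3 and ‖y − x‖ ≤ ‖z − x‖, then ‖z − y‖ < ‖z − x‖. -/
open InnerProductGeometry Real RealInnerProductSpace

/-- In an inner product space, if the angle at `x` between `y - x` and `z - x` is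
strictly less than `π/3` and `‖y - x‖ ≤ ‖z - x‖`, then `‖z - y‖ < ‖z - x‖` . -/
theorem stone_cone_inequality {E : Type*} [NormedAddCommGroup E] [InnerProductSpace ℝ E]
    (x y z : E) (hangle : InnerProductGeometry.angle (y - x) (z - x) < π / 3)
    (hle : ‖y - x‖ ≤ ‖z - x‖) : ‖z - y‖ < ‖z - x‖ := by
  set a := y - x with ha
  set b := z - x with hb
  have ha0 : a ≠ 0 := by
    intro h
    rw [h, InnerProductGeometry.angle_zero_left] at hangle
    linarith [Real.pi_pos]
  have hb0 : b ≠ 0 := by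
    intro h
    rw [h, InnerProductGeometry.angle_zero_right] at hangle
    linarith [Real.pi_pos]
  have hna : 0 < ‖a‖ := norm_pos_iff.mpr ha0
  have hnb : 0 < ‖b‖ := norm_pos_iff.mpr hb0
  have hcos : (1:ℝ)/2 < Real.cos (InnerProductGeometry.angle a b) := by
    have := Real.cos_lt_cos_of_nonneg_of_le_pi (InnerProductGeometry.angle_nonneg a b)
      (by linarith [Real.pi_pos]) hangle
    simpa [Real.cos_pi_div_three] using this
  have hinner : ⟪a, b⟫ = ‖a‖ * ‖b‖ * Real.cos (InnerProductGeometry.angle a b) := by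
    rw [InnerProductGeometry.cos_angle]
    field_simp
  have hinner2 : ‖a‖ * ‖a‖ < 2 * ⟪a, b⟫ := by
    rw [hinner]
    nlinarith [mul_pos hna hnb, mul_le_mul_of_nonneg_left hle (le_of_lt hna)]
  have hzy : z - y = b - a := by rw [ha, hb, sub_sub_sub_cancel_right]
  have hsq : ‖b - a‖ ^ 2 < ‖b‖ ^ 2 := by
    rw [norm_sub_sq_real, real_inner_comm]
    nlinarith
  rw [hzy]
  nlinarith [norm_nonneg (b - a), norm_nonneg b]
end

section
/- In the Euclidean plane ℝ², the family of five closed unit balls centred at the fifth roots of unity exp(2πik/5), k = 1,…,5 (viewed as points of ℝ²), has multiplicity 5 and no proper subfamily covers all five centres; consequently the Nagata dimension of ℝ² is at least 4. -/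
open Metric Complex ENNReal

noncomputable def Eroot (k : Fin 5) : ℂ := Complex.exp (2 * Real.pi * I * ((k : ℕ) + 1) / 5)

lemma Eroot_eq (k : Fin 5) :
    Eroot k = Complex.exp (((2 * Real.pi * ((k : ℕ) + 1) / 5 : ℝ) : ℂ) * I) := by
  unfold Eroot; congr 1; push_cast; ring

lemma abs_Eroot (k : Fin 5) : ‖Eroot k‖ = 1 := by
  rw [Eroot_eq]; exact Complex.norm_exp_ofReal_mul_I _

lemma dist_exp_sq (a b : ℝ) :
    dist (Complex.exp ((a : ℂ) * I)) (Complex.exp ((b : ℂ) * I)) ^ 2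
      = 2 - 2 * Real.cos (a - b) := by
  rw [Complex.dist_eq, Complex.sq_norm, Complex.normSq_apply]
  simp [Complex.exp_ofReal_mul_I_re, Complex.exp_ofReal_mul_I_im, Real.cos_sub]
  nlinarith [Real.sin_sq_add_cos_sq a, Real.sin_sq_add_cos_sq b]

lemma key_dist (a b : ℝ) (h : Real.cos (a - b) < 1/2) :
    1 < dist (Complex.exp ((a : ℂ) * I)) (Complex.exp ((b : ℂ) * I)) := by
  nlinarith [dist_exp_sq a b, dist_nonneg (x := Complex.exp ((a : ℂ) * I)) (y := Complex.exp ((b : ℂ) * I))]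

lemma cos_two_pi_fifth : Real.cos (2 * Real.pi / 5) < 1/2 := by
  have hpi := Real.pi_pos
  have := Real.cos_lt_cos_of_nonneg_of_le_pi (x := Real.pi / 3) (y := 2 * Real.pi / 5)
    (by positivity) (by linarith) (by linarith)
  rw [Real.cos_pi_div_three] at this
  linarith

lemma cos_four_pi_fifth : Real.cos (4 * Real.pi / 5) < 1/2 := by
  have hpi := Real.pi_pos
  have := Real.cos_lt_cos_of_nonneg_of_le_pi (x := Real.pi / 3) (y := 4 * Real.pi / 5)
    (by positivity) (by linarith) (by linarith)
  rw [Real.cos_pi_div_three] at this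
  linarith

lemma one_lt_dist_Eroot {k l : Fin 5} (h : k ≠ l) : 1 < dist (Eroot k) (Eroot l) := by
  rw [Eroot_eq, Eroot_eq]
  apply key_dist
  have harg : 2 * Real.pi * ((k : ℕ) + 1) / 5 - 2 * Real.pi * ((l : ℕ) + 1) / 5
      = 2 * Real.pi * (((((k : ℕ) : ℤ) - ((l : ℕ) : ℤ)) : ℤ) : ℝ) / 5 := by push_cast; ring
  rw [harg]
  have hk := k.isLt
  have hl := l.isLt
  have hne : (k : ℕ) ≠ (l : ℕ) := fun hh => h (Fin.ext hh)
  set m : ℤ := ((k : ℕ) : ℤ) - ((l : ℕ) : ℤ) with hm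
  have hm1 : -4 ≤ m := by omega
  have hm2 : m ≤ 4 := by omega
  have hm0 : m ≠ 0 := by omega
  have hc1 := cos_two_pi_fifth
  have hc2 := cos_four_pi_fifth
  have hc3 : Real.cos (6 * Real.pi / 5) < 1/2 := by
    rw [show 6 * Real.pi / 5 = -(4 * Real.pi / 5) + 2 * Real.pi by ring,
      Real.cos_add_two_pi, Real.cos_neg]; exact hc2
  have hc4 : Real.cos (8 * Real.pi / 5) < 1/2 := by
    rw [show 8 * Real.pi / 5 = -(2 * Real.pi / 5) + 2 * Real.pi by ring,
      Real.cos_add_two_pi, Real.cos_neg]; exact hc1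
  clear_value m
  interval_cases m <;> norm_num <;>
    first
    | omega
    | (rw [show -(2 * Real.pi * 4) / 5 = -(8 * Real.pi / 5) by ring, Real.cos_neg]; exact hc4)
    | (rw [show -(2 * Real.pi * 3) / 5 = -(6 * Real.pi / 5) by ring, Real.cos_neg]; exact hc3)
    | (rw [show -(2 * Real.pi * 2) / 5 = -(4 * Real.pi / 5) by ring, Real.cos_neg]; exact hc2)
    | (rw [show -(2 * Real.pi) / 5 = -(2 * Real.pi / 5) by ring, Real.cos_neg]; exact hc1)
    | exact hc1
    | (rw [show 2 * Real.pi * 2 / 5 = 4 * Real.pi / 5 by ring]; exact hc2)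
    | (rw [show 2 * Real.pi * 3 / 5 = 6 * Real.pi / 5 by ring]; exact hc3)
    | (rw [show 2 * Real.pi * 4 / 5 = 8 * Real.pi / 5 by ring]; exact hc4)

/-- In the Euclidean plane `ℝ² = ℂ`, the five closed unit balls centred at the
fifth roots of unity have multiplicity `5` (the origin lies in all of them),
no ball contains the centre of another one, hence no proper subfamily covers all
five centres; consequently the Nagata dimension of the plane is at least `4`
(on every scale). -/
theorem roots_of_unity_balls_nagata :
    (∀ k : Fin 5, (0 : ℂ) ∈ closedBall (Complex.exp (2 * Real.pi * I * ((k : ℕ) + 1) / 5)) 1) ∧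
    (∀ k l : Fin 5, k ≠ l →
      Complex.exp (2 * Real.pi * I * ((k : ℕ) + 1) / 5) ∉
        closedBall (Complex.exp (2 * Real.pi * I * ((l : ℕ) + 1) / 5)) 1) ∧
    (∀ S : Finset (Fin 5),
      (∀ k : Fin 5, ∃ l ∈ S,
        Complex.exp (2 * Real.pi * I * ((k : ℕ) + 1) / 5) ∈
          closedBall (Complex.exp (2 * Real.pi * I * ((l : ℕ) + 1) / 5)) 1) →
      S = Finset.univ) ∧
    (∀ s : ℝ≥0∞, 0 < s → ¬ NagataDimLE ℂ 3 s) := by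
  have habs : ∀ k : Fin 5, ‖Eroot k‖ = 1 := abs_Eroot
  have hdist : ∀ k l : Fin 5, k ≠ l → 1 < dist (Eroot k) (Eroot l) :=
    fun k l h => one_lt_dist_Eroot h
  have part1 : ∀ k : Fin 5,
      (0 : ℂ) ∈ closedBall (Complex.exp (2 * Real.pi * I * ((k : ℕ) + 1) / 5)) 1 := by
    intro k
    rw [mem_closedBall]
    have : dist (0 : ℂ) (Eroot k) = 1 := by
      rw [Complex.dist_eq, zero_sub, norm_neg, habs k]
    simpa [Eroot] using this.le
  have part2 : ∀ k l : Fin 5, k ≠ l →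
      Complex.exp (2 * Real.pi * I * ((k : ℕ) + 1) / 5) ∉
        closedBall (Complex.exp (2 * Real.pi * I * ((l : ℕ) + 1) / 5)) 1 := by
    intro k l hkl hmem
    rw [mem_closedBall] at hmem
    have := hdist k l hkl
    simp only [Eroot] at this
    linarith
  refine ⟨part1, part2, ?_, ?_⟩
  · intro S hS
    apply Finset.eq_univ_iff_forall.2
    intro k
    obtain ⟨l, hl, hmem⟩ := hS k
    rcases eq_or_ne k l with rfl | hne
    · exact hl
    · exact absurd hmem (part2 k l hne)
  · intro s hs h
    obtain ⟨x, hx0, hxs⟩ := exists_between hs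
    have hxt : x ≠ ⊤ := (hxs.trans_le le_top).ne
    set r : ℝ := x.toReal with hrdef
    have hr : 0 < r := ENNReal.toReal_pos hx0.ne' hxt
    set f : Fin 5 → ℂ × ℝ := fun k => ((r : ℂ) * Eroot k, r) with hf
    have hEinj : Function.Injective Eroot := by
      intro k l hkl
      by_contra hne
      have := hdist k l hne
      rw [hkl, dist_self] at this
      linarith
    have hfinj : Function.Injective f := by
      intro k l hkl
      have h1 : (r : ℂ) * Eroot k = (r : ℂ) * Eroot l := congrArg Prod.fst hkl
      have hr0 : (r : ℂ) ≠ 0 := by exact_mod_cast hr.ne'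
      exact hEinj (mul_left_cancel₀ hr0 h1)
    set γ : Finset (ℂ × ℝ) := Finset.univ.image f with hγ
    have hmemγ : ∀ p ∈ γ, ∃ k : Fin 5, p = f k := by
      intro p hp
      obtain ⟨k, _, rfl⟩ := Finset.mem_image.1 hp
      exact ⟨k, rfl⟩
    obtain ⟨γ', hsub, hmult, hcov⟩ := h γ (by
      intro p hp
      obtain ⟨k, rfl⟩ := hmemγ p hp
      refine ⟨hr.le, ?_⟩
      show ENNReal.ofReal r < s
      rw [hrdef, ENNReal.ofReal_toReal hxt]
      exact hxs)
    have hdist0 : ∀ k : Fin 5, dist (0 : ℂ) ((r : ℂ) * Eroot k) = r := by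
      intro k
      rw [Complex.dist_eq, zero_sub, norm_neg, norm_mul, Complex.norm_real, Real.norm_eq_abs,
        abs_of_pos hr, habs k, mul_one]
    have hdistkl : ∀ k l : Fin 5, k ≠ l → r < dist ((r : ℂ) * Eroot k) ((r : ℂ) * Eroot l) := by
      intro k l hkl
      rw [Complex.dist_eq, ← mul_sub, norm_mul, Complex.norm_real, Real.norm_eq_abs, abs_of_pos hr]
      have h1 := hdist k l hkl
      rw [Complex.dist_eq] at h1
      nlinarith
    have hall : ∀ k : Fin 5, f k ∈ γ' := by
      intro k
      obtain ⟨q, hq, hdq⟩ := hcov (f k) (Finset.mem_image.2 ⟨k, Finset.mem_univ k, rfl⟩)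
      obtain ⟨l, rfl⟩ := hmemγ q (hsub hq)
      rcases eq_or_ne k l with rfl | hne
      · exact hq
      · exact absurd hdq (not_le.2 (hdistkl k l hne))
    have hγ'eq : γ' = γ := by
      refine subset_antisymm hsub fun p hp => ?_
      obtain ⟨k, rfl⟩ := hmemγ p hp
      exact hall k
    have hmult0 := hmult 0
    rw [hγ'eq] at hmult0
    have hfilter : γ.filter (fun p => dist (0 : ℂ) p.1 ≤ p.2) = γ := by
      refine Finset.filter_true_of_mem fun p hp => ?_
      obtain ⟨k, rfl⟩ := hmemγ p hp
      exact (hdist0 k).le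
    rw [hfilter, hγ, Finset.card_image_of_injective _ hfinj, Finset.card_univ,
      Fintype.card_fin] at hmult0
    omega
end

section
/- Stone's geometric lemma without ties: let Ω be a metric space of Nagata dimension ≤ δ on scale s, let x, x₁,…,x_n be points such that all pairwise distances among these n+1 points are distinct, and let k be such that the k-NN radius r_{k}(x_i) within the sample (x, x₁,…,x_{i−1}, x_{i+1},…,x_n, with x replacing x_i) is < s for each i. Then the number of indices i with x_i ≠ x such that x is among the k nearest neighbours of x_i in that sample is at most (k+1)(δ+1). -/
open Metric ENNReal Finset
open scoped Classical

/-- The number of points of the modified sample `x₁, …, x_{i-1}, x, x_{i+1}, …, xₙ`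
lying in the closed ball of radius `r` around `xᵢ`. -/
noncomputable def sampleCount {Ω : Type*} [MetricSpace Ω] {n : ℕ} (x : Ω) (xs : Fin n → Ω)
    (i : Fin n) (r : ℝ) : ℕ :=
  ((univ.erase i).filter fun j => dist (xs j) (xs i) ≤ r).card +
    (if dist x (xs i) ≤ r then 1 else 0)

/-- The `k`-NN radius of `xᵢ` within the modified sample: the smallest `r ≥ 0`
such that the closed ball of radius `r` around `xᵢ` contains at least `k` points
of the sample. -/
noncomputable def kNNRadius {Ω : Type*} [MetricSpace Ω] {n : ℕ} (k : ℕ) (x : Ω)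
    (xs : Fin n → Ω) (i : Fin n) : ℝ :=
  sInf {r : ℝ | 0 ≤ r ∧ k ≤ sampleCount x xs i r}

private lemma filter_le_sInf_card_le (A : Finset ℝ) (hA : ∀ a ∈ A, 0 ≤ a) (k : ℕ) (hk : 1 ≤ k)
    (hT : {r : ℝ | 0 ≤ r ∧ k ≤ (A.filter (· ≤ r)).card}.Nonempty) :
    (A.filter (· ≤ sInf {r : ℝ | 0 ≤ r ∧ k ≤ (A.filter (· ≤ r)).card})).card ≤ k := by
  set T := {r : ℝ | 0 ≤ r ∧ k ≤ (A.filter (· ≤ r)).card} with hTdef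
  have hbdd : BddBelow T := ⟨0, fun r hr => hr.1⟩
  set m := sInf T with hm
  by_contra h
  push_neg at h
  set F := A.filter (· ≤ m) with hF
  have hFne : F.Nonempty := Finset.card_pos.mp (by omega)
  set d2 := F.max' hFne with hd2
  have hd2F : d2 ∈ F := F.max'_mem hFne
  have hE : (F.erase d2).Nonempty := by
    apply Finset.card_pos.mp
    rw [Finset.card_erase_of_mem hd2F]
    omega
  set d1 := (F.erase d2).max' hE with hd1
  have hd1E : d1 ∈ F.erase d2 := (F.erase d2).max'_mem hE
  have hd1F : d1 ∈ F := Finset.mem_of_mem_erase hd1E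
  have hd1A : d1 ∈ A := Finset.mem_of_mem_filter d1 hd1F
  have hsubset : F.erase d2 ⊆ A.filter (· ≤ d1) := by
    intro a ha
    refine Finset.mem_filter.mpr ⟨Finset.mem_of_mem_filter a (Finset.mem_of_mem_erase ha), ?_⟩
    exact (F.erase d2).le_max' a ha
  have hd1T : d1 ∈ T := by
    refine ⟨hA d1 hd1A, ?_⟩
    have hc : k ≤ (F.erase d2).card := by
      rw [Finset.card_erase_of_mem hd2F]; omega
    exact hc.trans (Finset.card_le_card hsubset)
  have hmd1 : m ≤ d1 := csInf_le hbdd hd1T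
  have hd2m : d2 ≤ m := (Finset.mem_filter.mp hd2F).2
  have hd1d2 : d1 ≤ d2 := F.le_max' d1 hd1F
  have hne12 : d1 ≠ d2 := (Finset.mem_erase.mp hd1E).1
  have : d1 < d2 := lt_of_le_of_ne hd1d2 hne12
  linarith

/-- Stone's geometric lemma for metric spaces of finite Nagata dimension, in the
absence of distance ties: if `Ω` has Nagata dimension `≤ δ` on the scale `s`, all
pairwise distances among `x, x₁, …, xₙ` are distinct, and for each `i` the `k`-NN
radius of `xᵢ` within the sample `x₁, …, x_{i-1}, x, x_{i+1}, …, xₙ` is `< s`,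
then the number of indices `i` with `xᵢ ≠ x` such that `x` is among the `k`
nearest neighbours of `xᵢ` in that sample is at most `(k + 1) * (δ + 1)`. -/
theorem stone_geometric_lemma_no_ties {Ω : Type*} [MetricSpace Ω] (δ : ℕ) (s : ℝ≥0∞)
    (hdim : NagataDimLE Ω δ s) (n k : ℕ) (x : Ω) (xs : Fin n → Ω)
    (y : Fin (n + 1) → Ω) (hy : y = Fin.cons x xs)
    (hties : ∀ i j k' l : Fin (n + 1), i ≠ j → k' ≠ l →
      dist (y i) (y j) = dist (y k') (y l) →
      ({i, j} : Finset (Fin (n + 1))) = {k', l})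
    (hrad : ∀ i : Fin n, ENNReal.ofReal (kNNRadius k x xs i) < s) :
    (univ.filter fun i : Fin n =>
        xs i ≠ x ∧
          ((univ.erase i).filter fun j => dist (xs j) (xs i) < dist x (xs i)).card < k).card
      ≤ (k + 1) * (δ + 1) := by
  classical
  subst hy
  set S := (univ.filter fun i : Fin n =>
      xs i ≠ x ∧
        ((univ.erase i).filter fun j => dist (xs j) (xs i) < dist x (xs i)).card < k)
    with hS
  show S.card ≤ (k + 1) * (δ + 1)
  rcases Nat.eq_zero_or_pos k with hk0 | hk1
  · have : S = ∅ := by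
      ext i; simp [hS, hk0]
    simp [this]
  rcases lt_or_ge n k with hnk | hkn
  · have h1 : S.card ≤ n := by
      calc S.card ≤ (univ : Finset (Fin n)).card := Finset.card_filter_le _ _
        _ = n := by simp
    have h2 : k ≤ (k + 1) * (δ + 1) := by nlinarith
    omega
  have hn1 : 1 ≤ n := le_trans hk1 hkn
  -- distance injectivity from no-ties
  have hinj : ∀ i₀ i j : Fin n, i ≠ i₀ → j ≠ i₀ →
      dist (xs i) (xs i₀) = dist (xs j) (xs i₀) → i = j := by
    intro i₀ i j hi hj hd
    have h := hties i.succ i₀.succ j.succ i₀.succ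
      ((Fin.succ_injective n).ne hi) ((Fin.succ_injective n).ne hj)
      (by simpa [Fin.cons_succ] using hd)
    have hmem : i.succ ∈ ({j.succ, i₀.succ} : Finset (Fin (n+1))) := by
      rw [← h]; simp
    rcases Finset.mem_insert.mp hmem with h' | h'
    · exact Fin.succ_injective n h'
    · exact absurd (Fin.succ_injective n (Finset.mem_singleton.mp h')) hi
  have hxd : ∀ i₀ j : Fin n, j ≠ i₀ → dist x (xs i₀) ≠ dist (xs j) (xs i₀) := by
    intro i₀ j hj hd
    have h := hties 0 i₀.succ j.succ i₀.succ (Ne.symm (Fin.succ_ne_zero i₀))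
      ((Fin.succ_injective n).ne hj)
      (by simpa [Fin.cons_succ, Fin.cons_zero] using hd)
    have hmem : (0 : Fin (n+1)) ∈ ({j.succ, i₀.succ} : Finset (Fin (n+1))) := by
      rw [← h]; simp
    rcases Finset.mem_insert.mp hmem with h' | h'
    · exact Fin.succ_ne_zero j h'.symm
    · exact Fin.succ_ne_zero i₀ (Finset.mem_singleton.mp h').symm
  -- the set of distances from xs i to the modified sample
  set A : Fin n → Finset ℝ := fun i =>
    insert (dist x (xs i)) ((univ.erase i).image fun j => dist (xs j) (xs i)) with hA
  have hAnonneg : ∀ i, ∀ a ∈ A i, 0 ≤ a := by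
    intro i a ha
    rcases Finset.mem_insert.mp ha with h | h
    · exact h ▸ dist_nonneg
    · obtain ⟨j, _, rfl⟩ := Finset.mem_image.mp h; exact dist_nonneg
  have hxnotmem : ∀ i : Fin n,
      dist x (xs i) ∉ ((univ.erase i).image fun j => dist (xs j) (xs i)) := by
    intro i h
    obtain ⟨j, hj, hje⟩ := Finset.mem_image.mp h
    exact hxd i j (Finset.ne_of_mem_erase hj) hje.symm
  have himgcard : ∀ i : Fin n, ∀ r : ℝ,
      ((((univ.erase i).image fun j => dist (xs j) (xs i)).filter (· ≤ r)).card)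
        = ((univ.erase i).filter fun j => dist (xs j) (xs i) ≤ r).card := by
    intro i r
    rw [Finset.filter_image]
    exact Finset.card_image_of_injOn (fun a ha b hb hab =>
      hinj i a b (Finset.ne_of_mem_erase (Finset.mem_of_mem_filter a ha))
        (Finset.ne_of_mem_erase (Finset.mem_of_mem_filter b hb)) hab)
  have hcount : ∀ i r, sampleCount x xs i r = ((A i).filter (· ≤ r)).card := by
    intro i r
    rw [sampleCount, hA]
    rw [Finset.filter_insert]
    by_cases hxr : dist x (xs i) ≤ r
    · rw [if_pos hxr, if_pos hxr,
        Finset.card_insert_of_notMem (fun hmem => hxnotmem i (Finset.mem_of_mem_filter _ hmem)),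
        himgcard]
    · rw [if_neg hxr, if_neg hxr, himgcard, add_zero]
  have hAcard : ∀ i : Fin n, (A i).card = n := by
    intro i
    rw [hA]
    simp only
    rw [Finset.card_insert_of_notMem (hxnotmem i),
      Finset.card_image_of_injOn (fun a ha b hb hab =>
        hinj i a b (Finset.ne_of_mem_erase ha) (Finset.ne_of_mem_erase hb) hab),
      Finset.card_erase_of_mem (Finset.mem_univ i), Finset.card_univ, Fintype.card_fin]
    omega
  have hTset : ∀ i : Fin n, {r : ℝ | 0 ≤ r ∧ k ≤ sampleCount x xs i r}
      = {r : ℝ | 0 ≤ r ∧ k ≤ ((A i).filter (· ≤ r)).card} := by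
    intro i; ext r; simp [hcount]
  have hTne : ∀ i : Fin n, {r : ℝ | 0 ≤ r ∧ k ≤ ((A i).filter (· ≤ r)).card}.Nonempty := by
    intro i
    have hAne : (A i).Nonempty := Finset.card_pos.mp (by rw [hAcard]; omega)
    refine ⟨(A i).max' hAne, hAnonneg i _ ((A i).max'_mem hAne), ?_⟩
    have hall : (A i).filter (· ≤ (A i).max' hAne) = A i :=
      Finset.filter_true_of_mem fun a ha => (A i).le_max' a ha
    rw [hall, hAcard]; exact hkn
  have hkNN : ∀ i : Fin n, kNNRadius k x xs i
      = sInf {r : ℝ | 0 ≤ r ∧ k ≤ ((A i).filter (· ≤ r)).card} := by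
    intro i; rw [kNNRadius, hTset i]
  have hcountbd : ∀ i : Fin n, ((A i).filter (· ≤ kNNRadius k x xs i)).card ≤ k := by
    intro i
    rw [hkNN i]
    exact filter_le_sInf_card_le (A i) (hAnonneg i) k hk1 (hTne i)
  have hr0 : ∀ i : Fin n, 0 ≤ kNNRadius k x xs i := by
    intro i
    exact Real.sInf_nonneg (fun r hr => hr.1)
  have hxle : ∀ i ∈ S, dist x (xs i) ≤ kNNRadius k x xs i := by
    intro i hi
    obtain ⟨-, hlt⟩ := (Finset.mem_filter.mp hi).2
    rw [kNNRadius]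
    apply le_csInf
    · rw [hTset i]; exact hTne i
    intro r hr
    obtain ⟨hr0', hrc⟩ := hr
    by_contra hrd
    push_neg at hrd
    have hsub' : ((univ.erase i).filter fun j => dist (xs j) (xs i) ≤ r)
        ⊆ ((univ.erase i).filter fun j => dist (xs j) (xs i) < dist x (xs i)) := by
      intro j hj
      obtain ⟨hje, hjd⟩ := Finset.mem_filter.mp hj
      exact Finset.mem_filter.mpr ⟨hje, lt_of_le_of_lt hjd hrd⟩
    have hle : sampleCount x xs i r
        ≤ ((univ.erase i).filter fun j => dist (xs j) (xs i) < dist x (xs i)).card := by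
      rw [sampleCount, if_neg (not_le.mpr hrd), add_zero]
      exact Finset.card_le_card hsub'
    omega
  -- apply Nagata dimension
  set γ : Finset (Ω × ℝ) := S.image fun i => (xs i, kNNRadius k x xs i) with hγ
  obtain ⟨γ', hsub, hmult, hcov⟩ := hdim γ (by
    intro p hp
    obtain ⟨i, hi, rfl⟩ := Finset.mem_image.mp hp
    exact ⟨hr0 i, hrad i⟩)
  have hγ'card : γ'.card ≤ δ + 1 := by
    have hm := hmult x
    rwa [Finset.filter_true_of_mem (fun p hp => by
      obtain ⟨i, hi, rfl⟩ := Finset.mem_image.mp (hsub hp)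
      exact hxle i hi)] at hm
  have hball : ∀ q ∈ γ', (S.filter fun i => dist (xs i) q.1 ≤ q.2).card ≤ k + 1 := by
    intro q hq
    obtain ⟨i₀, hi₀, rfl⟩ := Finset.mem_image.mp (hsub hq)
    set F := S.filter fun i => dist (xs i) (xs i₀) ≤ kNNRadius k x xs i₀ with hFdef
    have hsub2 : F ⊆ insert i₀ (F.erase i₀) := by
      intro a ha
      by_cases h : a = i₀
      · exact Finset.mem_insert.mpr (Or.inl h)
      · exact Finset.mem_insert.mpr (Or.inr (Finset.mem_erase.mpr ⟨h, ha⟩))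
    have h1 : F.card ≤ (F.erase i₀).card + 1 :=
      le_trans (Finset.card_le_card hsub2) (Finset.card_insert_le _ _)
    have h2 : (F.erase i₀).card ≤ ((A i₀).filter (· ≤ kNNRadius k x xs i₀)).card := by
      apply Finset.card_le_card_of_injOn (fun i => dist (xs i) (xs i₀))
      · intro i hi
        obtain ⟨hne, hiF⟩ := Finset.mem_erase.mp hi
        obtain ⟨hiS, hid⟩ := Finset.mem_filter.mp hiF
        refine Finset.mem_filter.mpr ⟨?_, hid⟩
        exact Finset.mem_insert_of_mem
          (Finset.mem_image_of_mem _ (Finset.mem_erase.mpr ⟨hne, Finset.mem_univ i⟩))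
      · intro a ha b hb hab
        exact hinj i₀ a b (Finset.mem_erase.mp ha).1 (Finset.mem_erase.mp hb).1 hab
    have h3 := hcountbd i₀
    omega
  have hSsub : S ⊆ γ'.biUnion fun q => S.filter fun i => dist (xs i) q.1 ≤ q.2 := by
    intro i hi
    obtain ⟨q, hq, hdq⟩ := hcov (xs i, kNNRadius k x xs i) (Finset.mem_image_of_mem _ hi)
    exact Finset.mem_biUnion.mpr ⟨q, hq, Finset.mem_filter.mpr ⟨hi, hdq⟩⟩
  calc S.card ≤ (γ'.biUnion fun q => S.filter fun i => dist (xs i) q.1 ≤ q.2).card :=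
        Finset.card_le_card hSsub
    _ ≤ ∑ q ∈ γ', (S.filter fun i => dist (xs i) q.1 ≤ q.2).card := Finset.card_biUnion_le
    _ ≤ ∑ _q ∈ γ', (k + 1) := Finset.sum_le_sum hball
    _ = γ'.card * (k + 1) := by rw [Finset.sum_const, smul_eq_mul]
    _ ≤ (δ + 1) * (k + 1) := Nat.mul_le_mul_right _ hγ'card
    _ = (k + 1) * (δ + 1) := Nat.mul_comm _ _
end

section
/- There exists a countable metric space {x₁, x₂, …} of Nagata dimension 0 on scale +∞ (in fact an ultrametric space), defined by d(x_i, x_j) = Σ_{m=1}^{max(i,j)} α^m for i ≠ j and some fixed 0 < α, such that for every N there is n with Σ_{i=2}^{n} 1/i ≥ N, where 1/i is the probability that x₁ is the (uniformly tie-broken) nearest neighbour of x_i within {x₁,…,x_n} \ {x_i}. In particular, the expected number of sample points having x₁ as nearest neighbour under uniform tie-breaking is Σ_{i=2}^{n} 1/i, which is unbounded in n. -/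
open Finset

/-- The distance on the countable set `{x₁, x₂, …}` (indexed by `ℕ`):
`d(xᵢ, xⱼ) = Σ_{m=1}^{max i j} α^m` for `i ≠ j`, and `0` on the diagonal. -/
noncomputable def D (α : ℝ) (i j : ℕ) : ℝ :=
  if i = j then 0 else ∑ m ∈ Finset.Icc 1 (max i j), α ^ m

lemma D_nonneg (α : ℝ) (hα : 0 < α) (i j : ℕ) : 0 ≤ D α i j := by
  unfold D
  split
  · exact le_rfl
  · positivity

lemma sum_mono_Icc (α : ℝ) (hα : 0 < α) {a b : ℕ} (h : a ≤ b) :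
    ∑ m ∈ Finset.Icc 1 a, α ^ m ≤ ∑ m ∈ Finset.Icc 1 b, α ^ m := by
  apply Finset.sum_le_sum_of_subset_of_nonneg
  · exact Finset.Icc_subset_Icc le_rfl h
  · intro m _ _; positivity

/-- There is a countable metric space `{x₁, x₂, …}` whose metric `D α` is an
ultrametric (hence of Nagata dimension `0` on the scale `+∞`), in which all points
`x₁, …, x_{i-1}` are equidistant from `xᵢ` (so each is the uniformly tie-broken
nearest neighbour of `xᵢ` with probability `1/(i-1)`), while for every `N` there is
`n` with `Σ_{i=2}^{n} 1/i ≥ N`: the expected number of sample points having `x₁`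
as nearest neighbour is unbounded in `n`. -/
theorem hub_example (α : ℝ) (hα : 0 < α) :
    (∀ i j k : ℕ, D α i k ≤ max (D α i j) (D α j k)) ∧
    (∀ i j : ℕ, D α i j = D α j i) ∧
    (∀ i j : ℕ, D α i j = 0 ↔ i = j) ∧
    (∀ i j j' : ℕ, 1 ≤ j → j < i → 1 ≤ j' → j' < i → D α i j = D α i j') ∧
    (∀ N : ℝ, ∃ n : ℕ, N ≤ ∑ i ∈ Finset.Icc 2 n, (1 : ℝ) / i) := by
  have hne : ∀ i j : ℕ, i ≠ j → D α i j = ∑ m ∈ Finset.Icc 1 (max i j), α ^ m :=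
    fun i j h => if_neg h
  refine ⟨?_, ?_, ?_, ?_, ?_⟩
  · intro i j k
    rcases eq_or_ne i k with rfl | hik
    · simp only [D, if_pos rfl]
      exact le_max_of_le_left (D_nonneg α hα i j)
    rcases eq_or_ne j i with rfl | hji
    · exact le_max_right _ _
    rcases eq_or_ne j k with rfl | hjk
    · exact le_max_left _ _
    rw [hne i k hik, hne i j (Ne.symm hji), hne j k hjk]
    rcases le_total (max i j) (max j k) with h | h
    · refine le_max_of_le_right (sum_mono_Icc α hα ?_)
      exact max_le (le_trans (le_max_left i j) h) (le_max_right j k)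
    · refine le_max_of_le_left (sum_mono_Icc α hα ?_)
      exact max_le (le_max_left i j) (le_trans (le_max_right j k) h)
  · intro i j
    rcases eq_or_ne i j with rfl | h
    · rfl
    · rw [hne i j h, hne j i (Ne.symm h), max_comm]
  · intro i j
    constructor
    · intro h0
      by_contra h
      rw [hne i j h] at h0
      have hmax : 1 ≤ max i j := by omega
      have : 0 < ∑ m ∈ Finset.Icc 1 (max i j), α ^ m := by
        apply Finset.sum_pos (fun m _ => pow_pos hα m)
        exact ⟨1, Finset.mem_Icc.mpr ⟨le_rfl, hmax⟩⟩
      linarith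
    · intro h; simp [D, h]
  · intro i j j' hj hji hj' hj'i
    rw [hne i j (by omega), hne i j' (by omega), max_eq_left hji.le, max_eq_left hj'i.le]
  · intro N
    have h := Real.tendsto_sum_range_one_div_nat_succ_atTop
    obtain ⟨n, hn1, hn⟩ := ((h.eventually_ge_atTop (N + 1)).and (Filter.eventually_ge_atTop 1)).exists
    refine ⟨n, ?_⟩
    have key : ∑ i ∈ Finset.Icc 1 n, (1 : ℝ) / i = ∑ i ∈ Finset.range n, (1 : ℝ) / (i + 1) := by
      rw [← Finset.Ico_add_one_right_eq_Icc, Finset.sum_Ico_eq_sum_range]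
      simp [add_comm]
    have split : ∑ i ∈ Finset.Icc 1 n, (1 : ℝ) / i
        = 1 + ∑ i ∈ Finset.Icc 2 n, (1 : ℝ) / i := by
      have : Finset.Icc 1 n = insert 1 (Finset.Icc 2 n) := by
        ext m; simp [Finset.mem_Icc, Finset.mem_insert]; omega
      rw [this, Finset.sum_insert (by simp)]
      norm_num
    have : ∑ i ∈ Finset.range n, (1 : ℝ) / (i + 1) = 1 + ∑ i ∈ Finset.Icc 2 n, (1 : ℝ) / i := by
      rw [← key, split]
    rw [this] at hn1
    linarith
end

section
/- There exist a metric space Ω of Nagata dimension 0 (an ultrametric space) and constants 0 < β < α < 1 with β < 1/2, such that in the ℓ¹-type direct sum Ω ⊕₁ [0,1] the points z = (x₀, 0) and z_i = (x_i, β^i), i ≥ 1, satisfy d(z_i, z_j) > max{d(z_i, z), d(z_j, z)} for all i ≠ j; consequently the Nagata dimension of Ω ⊕₁ [0,1] is infinite on every scale, even though dim_Nagata(Ω) = 0 and dim_Nagata([0,1]) = 1. -/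
open Metric ENNReal

noncomputable def OmDist (a b : ℕ × ℕ) : ℝ :=
  if a = b then 0 else if a.1 = b.1 then (1/2)^a.1 * (1 - (1/2)^(max a.2 b.2)) else 1

lemma omdist_aux (k m : ℕ) : 0 ≤ (1/2:ℝ)^k * (1 - (1/2)^m) := by
  have h1 : (1/2:ℝ)^m ≤ 1 := pow_le_one₀ (by norm_num) (by norm_num)
  have h2 : (0:ℝ) ≤ (1/2:ℝ)^k := by positivity
  nlinarith

lemma omdist_aux' (k m : ℕ) : (1/2:ℝ)^k * (1 - (1/2)^m) ≤ 1 := by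
  have h1 : (0:ℝ) ≤ (1/2:ℝ)^m := by positivity
  have h2 : (1/2:ℝ)^k ≤ 1 := pow_le_one₀ (by norm_num) (by norm_num)
  have h2' : (0:ℝ) ≤ (1/2:ℝ)^k := by positivity
  nlinarith

lemma omDist_nonneg (a b : ℕ × ℕ) : 0 ≤ OmDist a b := by
  unfold OmDist
  split
  · exact le_refl 0
  split
  · exact omdist_aux _ _
  · norm_num

lemma omDist_le_one (a b : ℕ × ℕ) : OmDist a b ≤ 1 := by
  unfold OmDist
  split
  · norm_num
  split
  · exact omdist_aux' _ _
  · exact le_refl 1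

lemma omDist_comm (a b : ℕ × ℕ) : OmDist a b = OmDist b a := by
  unfold OmDist
  by_cases h : a = b
  · simp [h]
  · rw [if_neg h, if_neg (Ne.symm h)]
    by_cases h1 : a.1 = b.1
    · rw [if_pos h1, if_pos h1.symm, h1, max_comm]
    · rw [if_neg h1, if_neg (Ne.symm h1)]

lemma omDist_pos (a b : ℕ × ℕ) (h : a ≠ b) : 0 < OmDist a b := by
  unfold OmDist
  rw [if_neg h]
  split
  · rename_i h1
    have hm : 1 ≤ max a.2 b.2 := by
      rcases Nat.eq_zero_or_pos (max a.2 b.2) with h0 | h0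
      · exfalso
        apply h
        have := Nat.max_eq_zero_iff.mp h0
        exact Prod.ext h1 (this.1.trans this.2.symm)
      · exact h0
    have : (1/2:ℝ)^(max a.2 b.2) ≤ (1/2)^1 :=
      pow_le_pow_of_le_one (by norm_num) (by norm_num) hm
    have h2 : (0:ℝ) < (1/2:ℝ)^a.1 := by positivity
    nlinarith
  · norm_num

/-- monotonicity of the intra-cluster distance in the max index -/
lemma omdist_mono (k : ℕ) {m m' : ℕ} (h : m ≤ m') :
    (1/2:ℝ)^k * (1 - (1/2)^m) ≤ (1/2:ℝ)^k * (1 - (1/2)^m') := by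
  have : (1/2:ℝ)^m' ≤ (1/2)^m := pow_le_pow_of_le_one (by norm_num) (by norm_num) h
  have h2 : (0:ℝ) ≤ (1/2:ℝ)^k := by positivity
  nlinarith

lemma omDist_ultra (a b c : ℕ × ℕ) : OmDist a c ≤ max (OmDist a b) (OmDist b c) := by
  by_cases hac : a = c
  · rw [hac]
    unfold OmDist
    rw [if_pos rfl]
    exact le_max_of_le_left (omDist_nonneg _ _)
  by_cases hab : a = b
  · rw [hab]; exact le_max_right _ _
  by_cases hbc : b = c
  · rw [← hbc]; exact le_max_left _ _
  by_cases h1 : a.1 = c.1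
  · by_cases h2 : a.1 = b.1
    · -- all in same cluster
      have h3 : b.1 = c.1 := h2 ▸ h1
      have e1 : OmDist a c = (1/2)^a.1 * (1 - (1/2)^(max a.2 c.2)) := by
        unfold OmDist; rw [if_neg hac, if_pos h1]
      have e2 : OmDist a b = (1/2)^a.1 * (1 - (1/2)^(max a.2 b.2)) := by
        unfold OmDist; rw [if_neg hab, if_pos h2]
      have e3 : OmDist b c = (1/2)^a.1 * (1 - (1/2)^(max b.2 c.2)) := by
        unfold OmDist; rw [if_neg hbc, if_pos h3, h2]
      rw [e1, e2, e3]
      rcases le_total (max a.2 b.2) (max b.2 c.2) with h4 | h4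
      · refine le_max_of_le_right (omdist_mono _ ?_)
        exact max_le (le_trans (le_trans (le_max_left _ _) h4) (le_refl _))
          (le_max_right _ _)
      · refine le_max_of_le_left (omdist_mono _ ?_)
        exact max_le (le_max_left _ _) (le_trans (le_max_right _ _) h4)
    · have e2 : OmDist a b = 1 := by unfold OmDist; rw [if_neg hab, if_neg h2]
      exact le_max_of_le_left (e2 ▸ omDist_le_one a c)
  · by_cases h2 : a.1 = b.1
    · have h3 : ¬ b.1 = c.1 := fun hh => h1 (h2.trans hh)
      have e3 : OmDist b c = 1 := by unfold OmDist; rw [if_neg hbc, if_neg h3]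
      exact le_max_of_le_right (e3 ▸ omDist_le_one a c)
    · have e2 : OmDist a b = 1 := by unfold OmDist; rw [if_neg hab, if_neg h2]
      exact le_max_of_le_left (e2 ▸ omDist_le_one a c)

def Omega : Type := ℕ × ℕ

noncomputable instance : MetricSpace Omega where
  dist := OmDist
  dist_self a := by show OmDist a a = 0; unfold OmDist; exact if_pos rfl
  dist_comm := omDist_comm
  dist_triangle a b c := le_trans (omDist_ultra a b c)
    (max_le (le_add_of_nonneg_right (omDist_nonneg _ _))
      (le_add_of_nonneg_left (omDist_nonneg _ _)))
  eq_of_dist_eq_zero := by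
    intro a b h
    by_contra hne
    exact absurd h (ne_of_gt (omDist_pos a b hne))

lemma omega_dist_def (a b : Omega) : dist a b = OmDist a b := rfl

lemma omega_ultra (a b c : Omega) : dist a c ≤ max (dist a b) (dist b c) :=
  omDist_ultra a b c


/-- Greedy selection of balls: a separated subfamily covering all centres. -/
lemma greedy {X : Type*} [MetricSpace X] :
    ∀ (n : ℕ) (γ : Finset (X × ℝ)), γ.card ≤ n → (∀ p ∈ γ, 0 ≤ p.2) →
    ∃ γ' ⊆ γ, (∀ p ∈ γ', ∀ q ∈ γ', p ≠ q → max p.2 q.2 < dist p.1 q.1) ∧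
      ∀ p ∈ γ, ∃ q ∈ γ', dist p.1 q.1 ≤ q.2 := by
  classical
  intro n
  induction n with
  | zero =>
    intro γ hc _
    rw [Nat.le_zero, Finset.card_eq_zero] at hc
    subst hc
    exact ⟨∅, Finset.Subset.refl _, by simp, by simp⟩
  | succ n ih =>
    intro γ hc hnn
    rcases Finset.eq_empty_or_nonempty γ with rfl | hne
    · exact ⟨∅, Finset.Subset.refl _, by simp, by simp⟩
    obtain ⟨p, hp, hpmax⟩ := γ.exists_max_image (fun q => q.2) hne
    set γ₂ := γ.filter (fun q => p.2 < dist q.1 p.1) with hγ₂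
    have hsub2 : γ₂ ⊆ γ.erase p := by
      intro q hq
      rw [Finset.mem_filter] at hq
      refine Finset.mem_erase.mpr ⟨?_, hq.1⟩
      intro h
      subst h
      simp at hq
      exact absurd hq.2 (not_lt.mpr (hnn q hq.1))
    have hc2 : γ₂.card ≤ n := by
      have := Finset.card_le_card hsub2
      have h2 := Finset.card_erase_of_mem hp
      omega
    obtain ⟨γ', hγ'sub, hsep, hcov⟩ := ih γ₂ hc2
      (fun q hq => hnn q (Finset.mem_filter.mp hq).1)
    have hγ'γ : γ' ⊆ γ := hγ'sub.trans (fun q hq => (Finset.mem_filter.mp hq).1)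
    refine ⟨insert p γ', Finset.insert_subset hp hγ'γ, ?_, ?_⟩
    · intro a ha b hb hab
      rw [Finset.mem_insert] at ha hb
      rcases ha with rfl | ha
      · rcases hb with rfl | hb
        · exact absurd rfl hab
        · have hb2 := hγ'sub hb
          rw [Finset.mem_filter] at hb2
          have := hpmax b (hb2.1)
          rw [dist_comm]
          rw [max_eq_left this]
          exact hb2.2
      · rcases hb with rfl | hb
        · have ha2 := hγ'sub ha
          rw [Finset.mem_filter] at ha2
          have := hpmax a (ha2.1)
          rw [max_eq_right this]
          exact ha2.2
        · exact hsep a ha b hb hab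
    · intro q hq
      by_cases hd : dist q.1 p.1 ≤ p.2
      · exact ⟨p, Finset.mem_insert_self _ _, hd⟩
      · have : q ∈ γ₂ := Finset.mem_filter.mpr ⟨hq, not_le.mp hd⟩
        obtain ⟨r, hr, hrd⟩ := hcov q this
        exact ⟨r, Finset.mem_insert_of_mem hr, hrd⟩

/-- An ultrametric space has Nagata dimension 0 at all scales. -/
lemma ultra_nagata_zero {X : Type*} [MetricSpace X]
    (hu : ∀ a b c : X, dist a c ≤ max (dist a b) (dist b c)) :
    NagataDimLE X 0 ⊤ := by
  intro γ hγ
  obtain ⟨γ', hsub, hsep, hcov⟩ := greedy γ.card γ (le_refl _) (fun p hp => (hγ p hp).1)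
  refine ⟨γ', hsub, ?_, hcov⟩
  intro y
  rw [Finset.card_le_one]
  intro a ha b hb
  rw [Finset.mem_filter] at ha hb
  by_contra hab
  have h1 := hsep a ha.1 b hb.1 hab
  have h2 : dist a.1 b.1 ≤ max (dist a.1 y) (dist y b.1) := hu _ _ _
  rw [dist_comm a.1 y] at h2
  have := max_le_max ha.2 hb.2
  exact absurd (h2.trans this) (not_le.mpr h1)

lemma no_three (y a b c ra rb rc : ℝ)
    (h1 : |y - a| ≤ ra) (h2 : |y - b| ≤ rb) (h3 : |y - c| ≤ rc)
    (g1 : max ra rb < |a - b|) (g2 : max rb rc < |b - c|)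
    (g3 : max ra rc < |a - c|) : False := by
  rw [abs_le] at h1 h2 h3
  rw [max_lt_iff] at g1 g2 g3
  obtain ⟨g1a, g1b⟩ := g1
  obtain ⟨g2a, g2b⟩ := g2
  obtain ⟨g3a, g3b⟩ := g3
  rcases abs_cases (a - b) with ⟨e1, s1⟩ | ⟨e1, s1⟩ <;>
    rcases abs_cases (b - c) with ⟨e2, s2⟩ | ⟨e2, s2⟩ <;>
      rcases abs_cases (a - c) with ⟨e3, s3⟩ | ⟨e3, s3⟩ <;>
        rw [e1] at g1a g1b <;> rw [e2] at g2a g2b <;> rw [e3] at g3a g3b <;>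
          linarith [h1.1, h1.2, h2.1, h2.2, h3.1, h3.2]

/-- The unit interval has Nagata dimension at most 1 at all scales. -/
lemma interval_nagata_one : NagataDimLE unitInterval 1 ⊤ := by
  intro γ hγ
  obtain ⟨γ', hsub, hsep, hcov⟩ := greedy γ.card γ (le_refl _) (fun p hp => (hγ p hp).1)
  refine ⟨γ', hsub, ?_, hcov⟩
  intro y
  by_contra hcard
  rw [not_le] at hcard
  have h3 : 2 < (γ'.filter fun p => dist y p.1 ≤ p.2).card := hcard
  rw [Finset.two_lt_card] at h3
  obtain ⟨p, hp, q, hq, r, hr, hpq, hpr, hqr⟩ := h3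
  rw [Finset.mem_filter] at hp hq hr
  have d1 := hsep p hp.1 q hq.1 hpq
  have d2 := hsep q hq.1 r hr.1 hqr
  have d3 := hsep p hp.1 r hr.1 hpr
  have e : ∀ u v : unitInterval, dist u v = |(u:ℝ) - (v:ℝ)| := fun u v => rfl
  rw [e] at d1 d2 d3
  have hyp := hp.2; have hyq := hq.2; have hyr := hr.2
  rw [e] at hyp hyq hyr
  exact no_three y p.1.1 q.1.1 r.1.1 p.2 q.2 r.2 hyp hyq hyr d1 d2 d3

/-- From a positive `ℝ≥0∞` scale, extract a small positive real below it. -/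
lemma exists_small_real {s : ℝ≥0∞} (hs : 0 < s) (M : ℝ) (hM : 0 < M) :
    ∃ r : ℝ, 0 < r ∧ r ≤ M ∧ ENNReal.ofReal r < s := by
  obtain ⟨c, hc0, hcs⟩ := exists_between hs
  have hct : c ≠ ⊤ := fun h => absurd (h ▸ hcs) (by simp)
  have hcr : 0 < c.toReal := ENNReal.toReal_pos (ne_of_gt hc0) hct
  refine ⟨min c.toReal M, lt_min hcr hM, min_le_right _ _, ?_⟩
  calc ENNReal.ofReal (min c.toReal M) ≤ ENNReal.ofReal c.toReal :=
        ENNReal.ofReal_le_ofReal (min_le_left _ _)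
    _ = c := ENNReal.ofReal_toReal hct
    _ < s := hcs

lemma interval_dist (u v : unitInterval) : dist u v = |(u:ℝ) - (v:ℝ)| := rfl

/-- The unit interval does not have Nagata dimension 0 at any scale. -/
lemma interval_not_nagata_zero (s : ℝ≥0∞) (hs : 0 < s) :
    ¬ NagataDimLE unitInterval 0 s := by
  classical
  intro h
  obtain ⟨r, hr0, hr1, hrs⟩ := exists_small_real hs (1/2) (by norm_num)
  set p0 : unitInterval := ⟨0, by norm_num⟩ with hp0
  set p1 : unitInterval := ⟨3*r/2, by constructor <;> nlinarith⟩ with hp1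
  set γ : Finset (unitInterval × ℝ) := {(p0, r), (p1, r)} with hγ
  obtain ⟨γ', hsub, hmult, hcov⟩ := h γ (by
    intro p hp
    rw [hγ, Finset.mem_insert, Finset.mem_singleton] at hp
    rcases hp with rfl | rfl <;> exact ⟨le_of_lt hr0, hrs⟩)
  have hne : p0 ≠ p1 := by
    intro he
    have : (0:ℝ) = 3*r/2 := congrArg Subtype.val he
    nlinarith
  have hd01 : dist p0 p1 = 3*r/2 := by
    rw [interval_dist]
    show |(0:ℝ) - 3*r/2| = 3*r/2
    rw [abs_sub_comm, sub_zero, abs_of_nonneg (by nlinarith)]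
  -- both balls must be selected
  have h0 : (p0, r) ∈ γ' := by
    obtain ⟨q, hq, hqd⟩ := hcov (p0, r) (by simp [hγ])
    have hqγ := hsub hq
    rw [hγ, Finset.mem_insert, Finset.mem_singleton] at hqγ
    rcases hqγ with rfl | rfl
    · exact hq
    · exfalso; rw [hd01] at hqd; nlinarith
  have h1 : (p1, r) ∈ γ' := by
    obtain ⟨q, hq, hqd⟩ := hcov (p1, r) (by simp [hγ])
    have hqγ := hsub hq
    rw [hγ, Finset.mem_insert, Finset.mem_singleton] at hqγ
    rcases hqγ with rfl | rfl
    · exfalso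
      rw [dist_comm, hd01] at hqd; nlinarith
    · exact hq
  -- the point r lies in both balls
  set y : unitInterval := ⟨r, by constructor <;> nlinarith⟩ with hy
  have hcard := hmult y
  have : 1 < (γ'.filter fun p => dist y p.1 ≤ p.2).card := by
    rw [Finset.one_lt_card]
    refine ⟨(p0, r), ?_, (p1, r), ?_, ?_⟩
    · refine Finset.mem_filter.mpr ⟨h0, ?_⟩
      show |(r:ℝ) - 0| ≤ r
      rw [sub_zero, abs_of_nonneg (le_of_lt hr0)]
    · refine Finset.mem_filter.mpr ⟨h1, ?_⟩
      show |(r:ℝ) - 3*r/2| ≤ r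
      rw [abs_sub_comm, abs_of_nonneg (by nlinarith)]
      nlinarith
    · simp [hne]
  omega

noncomputable def Zpt (k i : ℕ) : WithLp 1 (Omega × unitInterval) :=
  (WithLp.equiv 1 (Omega × unitInterval)).symm (((k, i) : ℕ × ℕ),
    ⟨if i = 0 then 0 else (1/2)^k * (1/4)^i, by
      constructor
      · split_ifs
        · exact le_refl 0
        · positivity
      · split_ifs
        · norm_num
        · have h1 : (1/2:ℝ)^k ≤ 1 := pow_le_one₀ (by norm_num) (by norm_num)
          have h2 : (1/4:ℝ)^i ≤ 1 := pow_le_one₀ (by norm_num) (by norm_num)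
          have h3 : (0:ℝ) ≤ (1/4:ℝ)^i := by positivity
          nlinarith⟩)

lemma l1dist (f g : WithLp 1 (Omega × unitInterval)) :
    dist f g = dist f.fst g.fst + dist f.snd g.snd := by
  rw [WithLp.prod_dist_eq_add (by norm_num : (0:ℝ) < (1:ℝ≥0∞).toReal)]
  norm_num

lemma dist_Zpt0 (k i : ℕ) (hi : 1 ≤ i) :
    dist (Zpt k i) (Zpt k 0) = (1/2)^k * (1 - (1/2)^i) + (1/2)^k * (1/4)^i := by
  rw [l1dist]
  have h1 : dist (Zpt k i).fst (Zpt k 0).fst = (1/2)^k * (1 - (1/2)^i) := by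
    show OmDist (k, i) (k, 0) = _
    unfold OmDist
    rw [if_neg (by simp; omega), if_pos rfl]
    simp [Nat.max_eq_left (Nat.zero_le i)]
  have h2 : dist (Zpt k i).snd (Zpt k 0).snd = (1/2)^k * (1/4)^i := by
    show |(if i = 0 then (0:ℝ) else (1/2)^k * (1/4)^i) -
        (if (0:ℕ) = 0 then (0:ℝ) else (1/2)^k * (1/4)^(0:ℕ))| = (1/2)^k * (1/4)^i
    rw [if_neg (by omega), if_pos rfl, sub_zero, abs_of_nonneg (by positivity)]
  rw [h1, h2]

lemma dist_ZptZpt (k i j : ℕ) (hi : 1 ≤ i) (hij : i < j) :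
    dist (Zpt k i) (Zpt k j) =
      (1/2)^k * (1 - (1/2)^j) + ((1/2)^k * (1/4)^i - (1/2)^k * (1/4)^j) := by
  rw [l1dist]
  have h1 : dist (Zpt k i).fst (Zpt k j).fst = (1/2)^k * (1 - (1/2)^j) := by
    show OmDist (k, i) (k, j) = _
    unfold OmDist
    rw [if_neg (by simp; omega), if_pos rfl]
    simp [Nat.max_eq_right (le_of_lt hij)]
  have h2 : dist (Zpt k i).snd (Zpt k j).snd = (1/2)^k * (1/4)^i - (1/2)^k * (1/4)^j := by
    show |(if i = 0 then (0:ℝ) else (1/2)^k * (1/4)^i) -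
      (if j = 0 then (0:ℝ) else (1/2)^k * (1/4)^j)| = _
    rw [if_neg (by omega), if_neg (by omega)]
    rw [abs_of_nonneg]
    have : (1/4:ℝ)^j ≤ (1/4)^i := pow_le_pow_of_le_one (by norm_num) (by norm_num) (le_of_lt hij)
    have h0 : (0:ℝ) ≤ (1/2:ℝ)^k := by positivity
    nlinarith
  rw [h1, h2]

lemma key_aux (k i j : ℕ) (hi : 1 ≤ i) (hij : i < j) :
    max (dist (Zpt k i) (Zpt k 0)) (dist (Zpt k j) (Zpt k 0)) <
      dist (Zpt k i) (Zpt k j) := by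
  have hj : 1 ≤ j := le_trans hi (le_of_lt hij)
  rw [dist_Zpt0 k i hi, dist_Zpt0 k j hj, dist_ZptZpt k i j hi hij]
  have hε : (0:ℝ) < (1/2:ℝ)^k := by positivity
  have h1 : (1/2:ℝ)^j ≤ (1/2)^i * (1/2) := by
    rw [← pow_succ]
    exact pow_le_pow_of_le_one (by norm_num) (by norm_num) hij
  have h2 : (1/4:ℝ)^j ≤ (1/4)^i * (1/4) := by
    rw [← pow_succ]
    exact pow_le_pow_of_le_one (by norm_num) (by norm_num) hij
  have h3 : (1/4:ℝ)^j < (1/2)^j :=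
    pow_lt_pow_left₀ (by norm_num) (by norm_num) (by omega)
  have h4 : (0:ℝ) < (1/4:ℝ)^i := by positivity
  rw [max_lt_iff]
  constructor
  · have A : (1/2:ℝ)^j + (1/4)^j < (1/2)^i := by nlinarith
    nlinarith [mul_lt_mul_of_pos_left A hε]
  · have B : 2 * (1/4:ℝ)^j < (1/4)^i := by nlinarith
    nlinarith [mul_lt_mul_of_pos_left B hε]

lemma key (k i j : ℕ) (hi : 1 ≤ i) (hj : 1 ≤ j) (hij : i ≠ j) :
    max (dist (Zpt k i) (Zpt k 0)) (dist (Zpt k j) (Zpt k 0)) <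
      dist (Zpt k i) (Zpt k j) := by
  rcases lt_or_gt_of_ne hij with h | h
  · exact key_aux k i j hi h
  · rw [max_comm, dist_comm (Zpt k i) (Zpt k j)]
    exact key_aux k j i hj h

lemma Zpt_inj (k : ℕ) : Function.Injective (Zpt k) := by
  intro i j h
  have h2 : (((k,i) : ℕ × ℕ) : ℕ × ℕ) = ((k,j) : ℕ × ℕ) :=
    congrArg (fun x => ((WithLp.equiv 1 (Omega × unitInterval)) x).1) h
  exact (Prod.mk.injEq _ _ _ _).mp h2 |>.2

lemma prod_not_nagata (δ : ℕ) (s : ℝ≥0∞) (hs : 0 < s) :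
    ¬ NagataDimLE (WithLp 1 (Omega × unitInterval)) δ s := by
  classical
  intro h
  obtain ⟨r, hr0, _, hrs⟩ := exists_small_real hs 1 one_pos
  obtain ⟨k, hk⟩ := exists_pow_lt_of_lt_one (show (0:ℝ) < r/2 by linarith)
    (show (1/2:ℝ) < 1 by norm_num)
  -- distances are at most 2 * (1/2)^k < r
  have hbound : ∀ i : ℕ, 1 ≤ i → dist (Zpt k i) (Zpt k 0) < r := by
    intro i hi
    rw [dist_Zpt0 k i hi]
    have h1 : (0:ℝ) < (1/2:ℝ)^i := by positivity
    have h2 : (1/4:ℝ)^i ≤ 1 := pow_le_one₀ (by norm_num) (by norm_num)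
    have h3 : (0:ℝ) < (1/2:ℝ)^k := by positivity
    nlinarith
  set γ : Finset (WithLp 1 (Omega × unitInterval) × ℝ) :=
    (Finset.Icc 1 (δ+2)).image (fun i => (Zpt k i, dist (Zpt k i) (Zpt k 0))) with hγ
  obtain ⟨γ', hsub, hmult, hcov⟩ := h γ (by
    intro p hp
    rw [hγ, Finset.mem_image] at hp
    obtain ⟨i, hiI, rfl⟩ := hp
    rw [Finset.mem_Icc] at hiI
    refine ⟨dist_nonneg, ?_⟩
    calc ENNReal.ofReal (dist (Zpt k i) (Zpt k 0)) ≤ ENNReal.ofReal r :=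
          ENNReal.ofReal_le_ofReal (le_of_lt (hbound i hiI.1))
      _ < s := hrs)
  have hall : ∀ i ∈ Finset.Icc 1 (δ+2),
      (Zpt k i, dist (Zpt k i) (Zpt k 0)) ∈ γ' := by
    intro i hiI
    rw [Finset.mem_Icc] at hiI
    obtain ⟨q, hq, hqd⟩ := hcov (Zpt k i, dist (Zpt k i) (Zpt k 0))
      (by rw [hγ]; exact Finset.mem_image_of_mem _ (Finset.mem_Icc.mpr hiI))
    have hqγ := hsub hq
    rw [hγ, Finset.mem_image] at hqγ
    obtain ⟨j, hjI, rfl⟩ := hqγ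
    rw [Finset.mem_Icc] at hjI
    by_cases hij : i = j
    · subst hij; exact hq
    · exfalso
      have := key k i j hiI.1 hjI.1 hij
      simp only at hqd
      have h2 : dist (Zpt k j) (Zpt k 0) ≤
          max (dist (Zpt k i) (Zpt k 0)) (dist (Zpt k j) (Zpt k 0)) := le_max_right _ _
      linarith
  have hsubfilter : (Finset.Icc 1 (δ+2)).image
      (fun i => (Zpt k i, dist (Zpt k i) (Zpt k 0))) ⊆
      γ'.filter (fun p => dist (Zpt k 0) p.1 ≤ p.2) := by
    intro p hp
    rw [Finset.mem_image] at hp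
    obtain ⟨i, hiI, rfl⟩ := hp
    refine Finset.mem_filter.mpr ⟨hall i hiI, ?_⟩
    rw [dist_comm]
  have hcard : δ + 2 ≤ (γ'.filter (fun p => dist (Zpt k 0) p.1 ≤ p.2)).card := by
    have h1 : ((Finset.Icc 1 (δ+2)).image
        (fun i => (Zpt k i, dist (Zpt k i) (Zpt k 0)))).card = δ + 2 := by
      rw [Finset.card_image_of_injective _ (fun a b hab => by
        exact Zpt_inj k (congrArg Prod.fst hab))]
      simp
    calc δ + 2 = _ := h1.symm
      _ ≤ _ := Finset.card_le_card hsubfilter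
  have := hmult (Zpt k 0)
  omega

/-- There exist a metric space `Ω` of Nagata dimension `0` (an ultrametric space)
and constants `0 < β < α < 1`, `β < 1/2`, such that in the `ℓ¹`-type direct sum
`Ω ⊕₁ [0,1]` the points `z = (x₀, 0)` and `zᵢ = (xᵢ, βⁱ)`, `i ≥ 1`, satisfy
`d(zᵢ, zⱼ) > max {d(zᵢ, z), d(zⱼ, z)}` for all `i ≠ j`; consequently the Nagata
dimension of `Ω ⊕₁ [0,1]` is infinite on every scale, even though
`dim_Nagata Ω = 0` and `dim_Nagata [0,1] = 1`. -/
theorem l1_sum_infinite_nagata_dim :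
    ∃ (Ω : Type) (_inst : MetricSpace Ω),
      (∀ a b c : Ω, dist a c ≤ max (dist a b) (dist b c)) ∧
      NagataDimLE Ω 0 ⊤ ∧
      NagataDimLE unitInterval 1 ⊤ ∧
      (∀ s : ℝ≥0∞, 0 < s → ¬ NagataDimLE unitInterval 0 s) ∧
      ∃ α β : ℝ, 0 < β ∧ β < α ∧ α < 1 ∧ β < 1 / 2 ∧
        ∃ (xx : ℕ → Ω) (t : ℕ → unitInterval) (t0 : unitInterval),
          (∀ i, (t i : ℝ) = β ^ i) ∧ ((t0 : ℝ) = 0) ∧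
          (∀ i j : ℕ, 1 ≤ i → 1 ≤ j → i ≠ j →
            dist ((WithLp.equiv 1 (Ω × unitInterval)).symm (xx i, t i))
                ((WithLp.equiv 1 (Ω × unitInterval)).symm (xx j, t j)) >
              max
                (dist ((WithLp.equiv 1 (Ω × unitInterval)).symm (xx i, t i))
                  ((WithLp.equiv 1 (Ω × unitInterval)).symm (xx 0, t0)))
                (dist ((WithLp.equiv 1 (Ω × unitInterval)).symm (xx j, t j))
                  ((WithLp.equiv 1 (Ω × unitInterval)).symm (xx 0, t0)))) ∧
          (∀ (δ : ℕ) (s : ℝ≥0∞), 0 < s →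
            ¬ NagataDimLE (WithLp 1 (Ω × unitInterval)) δ s) := by
  refine ⟨Omega, inferInstance, omega_ultra, ultra_nagata_zero omega_ultra,
    interval_nagata_one, interval_not_nagata_zero, 1/2, 1/4,
    by norm_num, by norm_num, by norm_num, by norm_num,
    (fun i => ((0, i) : ℕ × ℕ)),
    (fun i => ⟨(1/4)^i, ⟨by positivity, pow_le_one₀ (by norm_num) (by norm_num)⟩⟩),
    ⟨0, by norm_num⟩, fun i => rfl, rfl, ?_, prod_not_nagata⟩
  intro i j hi hj hij
  have hZ : ∀ m : ℕ, 1 ≤ m →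
      (WithLp.equiv 1 (Omega × unitInterval)).symm
        ((((0, m) : ℕ × ℕ) : Omega),
          (⟨(1/4)^m, ⟨by positivity, pow_le_one₀ (by norm_num) (by norm_num)⟩⟩ :
            unitInterval)) = Zpt 0 m := by
    intro m hm
    unfold Zpt
    congr 2
    refine Subtype.ext ?_
    show (1/4:ℝ)^m = if m = 0 then 0 else (1/2)^0 * (1/4)^m
    rw [if_neg (by omega)]
    norm_num
  have hZ0 : (WithLp.equiv 1 (Omega × unitInterval)).symm
      ((((0, 0) : ℕ × ℕ) : Omega), (⟨0, by norm_num⟩ : unitInterval)) = Zpt 0 0 := by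
    unfold Zpt
    congr 2
  rw [hZ i hi, hZ j hj, hZ0]
  exact key 0 i j hi hj hij
end

section
/- A subspace X of a metric space Ω has Nagata dimension ≤ δ in Ω on scale s if and only if every finite disconnected family of closed balls in Ω of radii < s with centres in X has multiplicity ≤ δ+1. -/
open Metric ENNReal

/-- A family of closed balls is disconnected if the centre of each ball does not
belong to any other ball of the family. -/
def BallsDisconnected {Ω : Type*} [MetricSpace Ω] (γ : Finset (Ω × ℝ)) : Prop :=
  ∀ p ∈ γ, ∀ q ∈ γ, p ≠ q → ¬ dist p.1 q.1 ≤ q.2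

/-- A subspace `X` of `Ω` has Nagata dimension `≤ δ` in `Ω` on the scale `s`:
every finite family of closed balls in `Ω` with centres in `X` and radii `< s`
admits a subfamily of multiplicity `≤ δ + 1` covering all the centres. -/
def NagataDimOnLE {Ω : Type*} [MetricSpace Ω] (X : Set Ω) (δ : ℕ) (s : ℝ≥0∞) : Prop :=
  ∀ γ : Finset (Ω × ℝ), (∀ p ∈ γ, p.1 ∈ X ∧ 0 ≤ p.2 ∧ ENNReal.ofReal p.2 < s) →
    ∃ γ' ⊆ γ, BallMultLE γ' (δ + 1) ∧ ∀ p ∈ γ, ∃ q ∈ γ', dist p.1 q.1 ≤ q.2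

/-- Every finite family of closed balls with nonnegative radii admits a
disconnected subfamily covering all the centres. -/
lemma exists_disconnected_cover {Ω : Type*} [MetricSpace Ω] (γ : Finset (Ω × ℝ))
    (hγ : ∀ p ∈ γ, 0 ≤ p.2) :
    ∃ γ' ⊆ γ, BallsDisconnected γ' ∧ ∀ p ∈ γ, ∃ q ∈ γ', dist p.1 q.1 ≤ q.2 := by
  classical
  induction γ using Finset.strongInduction with
  | _ γ ih =>
    rcases γ.eq_empty_or_nonempty with rfl | hne
    · exact ⟨∅, Finset.Subset.refl _, fun p hp => absurd hp (by simp),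
        fun p hp => absurd hp (by simp)⟩
    · obtain ⟨p, hp, hmax⟩ := γ.exists_max_image Prod.snd hne
      set γ'' := γ.filter (fun q => ¬ dist q.1 p.1 ≤ p.2) with hγ''
      have hpnot : p ∉ γ'' := by
        simp only [hγ'', Finset.mem_filter, not_and, not_not]
        intro _
        simpa using hγ p hp
      have hss : γ'' ⊂ γ := ⟨Finset.filter_subset _ _, fun hsub => hpnot (hsub hp)⟩
      obtain ⟨γ', hsub, hdisc, hcov⟩ := ih γ'' hss
        (fun q hq => hγ q (Finset.filter_subset _ _ hq))
      refine ⟨insert p γ', ?_, ?_, ?_⟩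
      · intro q hq
        rcases Finset.mem_insert.1 hq with rfl | hq
        · exact hp
        · exact Finset.filter_subset _ _ (hsub hq)
      · intro a ha b hb hab hle
        rcases Finset.mem_insert.1 ha with ha' | ha'
        · rcases Finset.mem_insert.1 hb with hb' | hb'
          · exact hab (ha'.trans hb'.symm)
          · have hbm := hsub hb'
            simp only [hγ'', Finset.mem_filter] at hbm
            have h1 : b.2 ≤ p.2 := hmax b hbm.1
            rw [ha'] at hle
            exact hbm.2 (by rw [dist_comm] at hle; linarith)
        · rcases Finset.mem_insert.1 hb with hb' | hb'
          · have ham := hsub ha'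
            simp only [hγ'', Finset.mem_filter] at ham
            rw [hb'] at hle
            exact ham.2 hle
          · exact hdisc a ha' b hb' hab hle
      · intro q hq
        by_cases hle : dist q.1 p.1 ≤ p.2
        · exact ⟨p, Finset.mem_insert_self _ _, hle⟩
        · obtain ⟨r, hr, hdr⟩ := hcov q (Finset.mem_filter.2 ⟨hq, hle⟩)
          exact ⟨r, Finset.mem_insert_of_mem hr, hdr⟩

/-- `X` has Nagata dimension `≤ δ` in `Ω` on scale `s` iff every finite
disconnected family of closed balls in `Ω` of radii `< s` with centres in `X`
has multiplicity `≤ δ + 1`. -/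
theorem nagataDimOnLE_iff_disconnected {Ω : Type*} [MetricSpace Ω] (X : Set Ω)
    (δ : ℕ) (s : ℝ≥0∞) :
    NagataDimOnLE X δ s ↔
      ∀ γ : Finset (Ω × ℝ), (∀ p ∈ γ, p.1 ∈ X ∧ 0 ≤ p.2 ∧ ENNReal.ofReal p.2 < s) →
        BallsDisconnected γ → BallMultLE γ (δ + 1) := by
  constructor
  · intro h γ hγ hdisc
    obtain ⟨γ', hsub, hmult, hcov⟩ := h γ hγ
    have : γ = γ' := by
      apply Finset.Subset.antisymm _ hsub
      intro p hp
      obtain ⟨q, hq, hdq⟩ := hcov p hp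
      rcases eq_or_ne p q with rfl | hne
      · exact hq
      · exact absurd hdq (hdisc p hp q (hsub hq) hne)
    rw [this]; exact hmult
  · intro h γ hγ
    obtain ⟨γ', hsub, hdisc, hcov⟩ :=
      exists_disconnected_cover γ (fun p hp => (hγ p hp).2.1)
    exact ⟨γ', hsub, h γ' (fun p hp => hγ p (hsub hp)) hdisc, hcov⟩
end

section
/- For a subspace X of a metric space Ω and scale s, the following are equivalent: (1) every finite family of closed balls of radii < s with centres in X admits a subfamily of multiplicity ≤ δ+1 covering all centres; (2) the same holds for finite families of open balls of radii < s with centres in X; (3) every finite disconnected family of open balls of radii < s with centres in X has multiplicity ≤ δ+1. -/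
open Metric ENNReal

/-- Multiplicity `≤ m` for a finite family of closed balls. -/
def ClosedBallMultLE {Ω : Type*} [MetricSpace Ω] (γ : Finset (Ω × ℝ)) (m : ℕ) : Prop :=
  ∀ y : Ω, (γ.filter fun p => dist y p.1 ≤ p.2).card ≤ m

/-- Multiplicity `≤ m` for a finite family of open balls. -/
def OpenBallMultLE {Ω : Type*} [MetricSpace Ω] (γ : Finset (Ω × ℝ)) (m : ℕ) : Prop :=
  ∀ y : Ω, (γ.filter fun p => dist y p.1 < p.2).card ≤ m

/-- A family of open balls is disconnected if no centre belongs to another ball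
of the family. -/
def OpenBallsDisconnected {Ω : Type*} [MetricSpace Ω] (γ : Finset (Ω × ℝ)) : Prop :=
  ∀ p ∈ γ, ∀ q ∈ γ, p ≠ q → ¬ dist p.1 q.1 < q.2


lemma greedy_closed {Ω : Type*} [MetricSpace Ω] (γ : Finset (Ω × ℝ))
    (hr : ∀ p ∈ γ, 0 ≤ p.2) :
    ∃ γ' ⊆ γ, (∀ p ∈ γ', ∀ q ∈ γ', p ≠ q → q.2 < dist p.1 q.1) ∧
      ∀ p ∈ γ, ∃ q ∈ γ', dist p.1 q.1 ≤ q.2 := by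
  classical
  induction γ using Finset.strongInduction with
  | _ γ ih =>
    rcases γ.eq_empty_or_nonempty with rfl | hne
    · exact ⟨∅, Finset.Subset.refl _, by simp, by simp⟩
    · obtain ⟨p, hp, hmax⟩ := γ.exists_max_image Prod.snd hne
      set γ₂ := γ.filter (fun q => p.2 < dist q.1 p.1) with hγ₂
      have hpnot : p ∉ γ₂ := by
        simp [hγ₂, not_lt.2 (hr p hp)]
      have hss : γ₂ ⊂ γ :=
        (Finset.ssubset_iff_of_subset (Finset.filter_subset _ _)).2 ⟨p, hp, hpnot⟩
      obtain ⟨γ'', hsub, hdisc, hcov⟩ :=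
        ih γ₂ hss (fun q hq => hr q (Finset.filter_subset _ _ hq))
      refine ⟨insert p γ'', Finset.insert_subset hp (hsub.trans (Finset.filter_subset _ _)), ?_, ?_⟩
      · intro a ha b hb hab
        rcases Finset.mem_insert.1 ha with rfl | ha' <;>
          rcases Finset.mem_insert.1 hb with h | hb'
        · exact absurd h.symm hab
        · have h1 := (Finset.mem_filter.1 (hsub hb')).2
          have h2 := hmax b (Finset.filter_subset _ _ (hsub hb'))
          calc b.2 ≤ a.2 := h2
            _ < dist b.1 a.1 := h1
            _ = dist a.1 b.1 := dist_comm _ _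
        · subst h; exact (Finset.mem_filter.1 (hsub ha')).2
        · exact hdisc a ha' b hb' hab
      · intro q hq
        by_cases h : p.2 < dist q.1 p.1
        · obtain ⟨r, hr', hd⟩ := hcov q (Finset.mem_filter.2 ⟨hq, h⟩)
          exact ⟨r, Finset.mem_insert_of_mem hr', hd⟩
        · exact ⟨p, Finset.mem_insert_self _ _, not_lt.1 h⟩

lemma greedy_open {Ω : Type*} [MetricSpace Ω] (γ : Finset (Ω × ℝ))
    (hr : ∀ p ∈ γ, 0 < p.2) :
    ∃ γ' ⊆ γ, (∀ p ∈ γ', ∀ q ∈ γ', p ≠ q → q.2 ≤ dist p.1 q.1) ∧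
      ∀ p ∈ γ, ∃ q ∈ γ', dist p.1 q.1 < q.2 := by
  classical
  induction γ using Finset.strongInduction with
  | _ γ ih =>
    rcases γ.eq_empty_or_nonempty with rfl | hne
    · exact ⟨∅, Finset.Subset.refl _, by simp, by simp⟩
    · obtain ⟨p, hp, hmax⟩ := γ.exists_max_image Prod.snd hne
      set γ₂ := γ.filter (fun q => p.2 ≤ dist q.1 p.1) with hγ₂
      have hpnot : p ∉ γ₂ := by
        simp [hγ₂, not_le.2 (hr p hp)]
      have hss : γ₂ ⊂ γ :=
        (Finset.ssubset_iff_of_subset (Finset.filter_subset _ _)).2 ⟨p, hp, hpnot⟩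
      obtain ⟨γ'', hsub, hdisc, hcov⟩ :=
        ih γ₂ hss (fun q hq => hr q (Finset.filter_subset _ _ hq))
      refine ⟨insert p γ'', Finset.insert_subset hp (hsub.trans (Finset.filter_subset _ _)), ?_, ?_⟩
      · intro a ha b hb hab
        rcases Finset.mem_insert.1 ha with rfl | ha' <;>
          rcases Finset.mem_insert.1 hb with h | hb'
        · exact absurd h.symm hab
        · have h1 := (Finset.mem_filter.1 (hsub hb')).2
          have h2 := hmax b (Finset.filter_subset _ _ (hsub hb'))
          calc b.2 ≤ a.2 := h2
            _ ≤ dist b.1 a.1 := h1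
            _ = dist a.1 b.1 := dist_comm _ _
        · subst h; exact (Finset.mem_filter.1 (hsub ha')).2
        · exact hdisc a ha' b hb' hab
      · intro q hq
        by_cases h : p.2 ≤ dist q.1 p.1
        · obtain ⟨r, hr', hd⟩ := hcov q (Finset.mem_filter.2 ⟨hq, h⟩)
          exact ⟨r, Finset.mem_insert_of_mem hr', hd⟩
        · exact ⟨p, Finset.mem_insert_self _ _, not_le.1 h⟩

theorem aux_one_three {Ω : Type*} [MetricSpace Ω]
    (X : Set Ω) (δ : ℕ) (s : ℝ≥0∞)
    (h1 : ∀ γ : Finset (Ω × ℝ), (∀ p ∈ γ, p.1 ∈ X ∧ 0 ≤ p.2 ∧ ENNReal.ofReal p.2 < s) →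
        ∃ γ' ⊆ γ, (∀ y : Ω, (γ'.filter fun p => dist y p.1 ≤ p.2).card ≤ (δ+1)) ∧ ∀ p ∈ γ, ∃ q ∈ γ', dist p.1 q.1 ≤ q.2) :
    (∀ γ : Finset (Ω × ℝ), (∀ p ∈ γ, p.1 ∈ X ∧ 0 < p.2 ∧ ENNReal.ofReal p.2 < s) →
        (∀ p ∈ γ, ∀ q ∈ γ, p ≠ q → ¬ dist p.1 q.1 < q.2) →
        ∀ y : Ω, (γ.filter fun p => dist y p.1 < p.2).card ≤ (δ+1)) := by
  classical
  intro γ hγ hdisc y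
  set F := γ.filter (fun p => dist y p.1 < p.2) with hF
  have hFγ : F ⊆ γ := Finset.filter_subset _ _
  rcases F.eq_empty_or_nonempty with he | hne
  · simp [he]
  · set c : ℝ := max (1/2) (F.sup' hne fun p => dist y p.1 / p.2) with hc
    have hc0 : (0:ℝ) < c := lt_of_lt_of_le one_half_pos (le_max_left _ _)
    have hc1 : c < 1 := by
      refine max_lt (by norm_num) ((Finset.sup'_lt_iff hne).2 fun p hp => ?_)
      have hp2 : 0 < p.2 := (hγ p (hFγ hp)).2.1
      exact (div_lt_one hp2).2 (Finset.mem_filter.1 hp).2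
    have hcd : ∀ p ∈ F, dist y p.1 ≤ c * p.2 := by
      intro p hp
      have hp2 : 0 < p.2 := (hγ p (hFγ hp)).2.1
      have := Finset.le_sup' (fun p : Ω × ℝ => dist y p.1 / p.2) hp
      have h2 : dist y p.1 / p.2 ≤ c := this.trans (le_max_right _ _)
      calc dist y p.1 = dist y p.1 / p.2 * p.2 := by field_simp
        _ ≤ c * p.2 := by nlinarith
    set F' := F.image (fun p : Ω × ℝ => (p.1, c * p.2)) with hF'
    obtain ⟨γ'', hsub, hmult, hcov⟩ := h1 F' (by
      intro p' hp'
      obtain ⟨p, hp, rfl⟩ := Finset.mem_image.1 hp'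
      have hpγ := hγ p (hFγ hp)
      refine ⟨hpγ.1, (mul_pos hc0 hpγ.2.1).le, ?_⟩
      have : c * p.2 ≤ p.2 := by nlinarith [hpγ.2.1]
      exact lt_of_le_of_lt (ENNReal.ofReal_le_ofReal this) hpγ.2.2)
    have hF'γ'' : F' ⊆ γ'' := by
      intro p' hp'
      obtain ⟨p, hp, rfl⟩ := Finset.mem_image.1 hp'
      obtain ⟨q', hq', hd⟩ := hcov _ hp'
      obtain ⟨q, hq, rfl⟩ := Finset.mem_image.1 (hsub hq')
      have hq2 : 0 < q.2 := (hγ q (hFγ hq)).2.1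
      simp only at hd
      have hlt : dist p.1 q.1 < q.2 := lt_of_le_of_lt hd (by nlinarith)
      have hpq : p = q := by
        by_contra hne'
        exact hdisc p (hFγ hp) q (hFγ hq) hne' hlt
      subst hpq
      exact hq'
    have hFsub : F' ⊆ γ''.filter fun p => dist y p.1 ≤ p.2 := by
      intro p' hp'
      refine Finset.mem_filter.2 ⟨hF'γ'' hp', ?_⟩
      obtain ⟨p, hp, rfl⟩ := Finset.mem_image.1 hp'
      exact hcd p hp
    have hcard : F.card = F'.card := by
      rw [hF', Finset.card_image_of_injective]
      intro a b hab
      simp only [Prod.mk.injEq] at hab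
      exact Prod.ext hab.1 (mul_left_cancel₀ (ne_of_gt hc0) hab.2)
    calc F.card = F'.card := hcard
      _ ≤ _ := Finset.card_le_card hFsub
      _ ≤ δ + 1 := hmult y

theorem aux_three_one {Ω : Type*} [MetricSpace Ω]
    (X : Set Ω) (δ : ℕ) (s : ℝ≥0∞)
    (h3 : ∀ γ : Finset (Ω × ℝ), (∀ p ∈ γ, p.1 ∈ X ∧ 0 < p.2 ∧ ENNReal.ofReal p.2 < s) →
        (∀ p ∈ γ, ∀ q ∈ γ, p ≠ q → ¬ dist p.1 q.1 < q.2) →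
        ∀ y : Ω, (γ.filter fun p => dist y p.1 < p.2).card ≤ (δ+1)) :
    (∀ γ : Finset (Ω × ℝ), (∀ p ∈ γ, p.1 ∈ X ∧ 0 ≤ p.2 ∧ ENNReal.ofReal p.2 < s) →
        ∃ γ' ⊆ γ, (∀ y : Ω, (γ'.filter fun p => dist y p.1 ≤ p.2).card ≤ (δ+1)) ∧
          ∀ p ∈ γ, ∃ q ∈ γ', dist p.1 q.1 ≤ q.2) := by
  classical
  intro γ hγ
  obtain ⟨γ', hsub, hdisc, hcov⟩ := greedy_closed γ (fun p hp => (hγ p hp).2.1)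
  refine ⟨γ', hsub, ?_, hcov⟩
  intro y
  by_contra hcon
  push_neg at hcon
  set F := γ'.filter (fun p => dist y p.1 ≤ p.2) with hFdef
  have hFγ : F ⊆ γ := (Finset.filter_subset _ _).trans hsub
  have hne : F.Nonempty := Finset.card_pos.1 (by omega)
  have hGne : (F ×ˢ F).Nonempty := hne.product hne
  set f : (Ω × ℝ) × (Ω × ℝ) → ℝ := fun pq =>
    min (if s = ⊤ then 1 else (s.toReal - pq.2.2) / 2)
      (if pq.1 = pq.2 then 1 else dist pq.1.1 pq.2.1 - pq.2.2) with hfdef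
  set ε := (F ×ˢ F).inf' hGne f with hε
  have hεpos : 0 < ε := by
    rw [hε, Finset.lt_inf'_iff]
    rintro ⟨p, q⟩ hpq
    rw [Finset.mem_product] at hpq
    have hq := hγ q (hFγ hpq.2)
    refine lt_min ?_ ?_
    · split_ifs with hs
      · norm_num
      · have : q.2 < s.toReal := (ENNReal.ofReal_lt_iff_lt_toReal hq.2.1 hs).1 hq.2.2
        linarith
    · split_ifs with hpq'
      · norm_num
      · have := hdisc p ((Finset.filter_subset _ _) hpq.1)
          q ((Finset.filter_subset _ _) hpq.2) hpq'
        linarith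
  have hεle : ∀ p ∈ F, ∀ q ∈ F, ε ≤ f (p, q) := fun p hp q hq =>
    Finset.inf'_le f (Finset.mem_product.2 ⟨hp, hq⟩)
  set F' := F.image (fun p : Ω × ℝ => (p.1, p.2 + ε)) with hF'
  have hmult := h3 F' (by
      intro p' hp'
      obtain ⟨p, hp, rfl⟩ := Finset.mem_image.1 hp'
      have hpγ := hγ p (hFγ hp)
      show p.1 ∈ X ∧ 0 < p.2 + ε ∧ ENNReal.ofReal (p.2 + ε) < s
      refine ⟨hpγ.1, by linarith [hpγ.2.1], ?_⟩
      by_cases hs : s = ⊤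
      · simp [hs]
      · have h1 : ε ≤ (s.toReal - p.2) / 2 := (hεle p hp p hp).trans ((min_le_left _ _).trans_eq (by rw [if_neg hs]))
        have h2 : p.2 < s.toReal := (ENNReal.ofReal_lt_iff_lt_toReal hpγ.2.1 hs).1 hpγ.2.2
        exact (ENNReal.ofReal_lt_iff_lt_toReal (by linarith [hpγ.2.1, hεpos]) hs).2 (by linarith))
    (by
      rintro p' hp' q' hq' hne' hlt
      obtain ⟨p, hp, rfl⟩ := Finset.mem_image.1 hp'
      obtain ⟨q, hq, rfl⟩ := Finset.mem_image.1 hq'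
      have hpq : p ≠ q := by rintro rfl; exact hne' rfl
      have h1 : ε ≤ dist p.1 q.1 - q.2 :=
        (hεle p hp q hq).trans ((min_le_right _ _).trans_eq (by rw [if_neg hpq]))
      simp only at hlt
      linarith) y
  have hall : F' ⊆ F'.filter fun p => dist y p.1 < p.2 := by
    intro p' hp'
    refine Finset.mem_filter.2 ⟨hp', ?_⟩
    obtain ⟨p, hp, rfl⟩ := Finset.mem_image.1 hp'
    have := (Finset.mem_filter.1 hp).2
    simp only
    linarith
  have hcard : F.card = F'.card := by
    rw [hF', Finset.card_image_of_injective]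
    intro a b hab
    simp only [Prod.mk.injEq] at hab
    exact Prod.ext hab.1 (by linarith [hab.2])
  have : F'.card ≤ δ + 1 := le_trans (Finset.card_le_card hall) hmult
  omega

theorem aux_three_two {Ω : Type*} [MetricSpace Ω]
    (X : Set Ω) (δ : ℕ) (s : ℝ≥0∞)
    (h3 : ∀ γ : Finset (Ω × ℝ), (∀ p ∈ γ, p.1 ∈ X ∧ 0 < p.2 ∧ ENNReal.ofReal p.2 < s) →
        (∀ p ∈ γ, ∀ q ∈ γ, p ≠ q → ¬ dist p.1 q.1 < q.2) →
        ∀ y : Ω, (γ.filter fun p => dist y p.1 < p.2).card ≤ (δ+1)) :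
    (∀ γ : Finset (Ω × ℝ), (∀ p ∈ γ, p.1 ∈ X ∧ 0 < p.2 ∧ ENNReal.ofReal p.2 < s) →
        ∃ γ' ⊆ γ, (∀ y : Ω, (γ'.filter fun p => dist y p.1 < p.2).card ≤ (δ+1)) ∧
          ∀ p ∈ γ, ∃ q ∈ γ', dist p.1 q.1 < q.2) := by
  intro γ hγ
  obtain ⟨γ', hsub, hdisc, hcov⟩ := greedy_open γ (fun p hp => (hγ p hp).2.1)
  exact ⟨γ', hsub, h3 γ' (fun p hp => hγ p (hsub hp))
    (fun p hp q hq hne => not_lt.2 (hdisc p hp q hq hne)), hcov⟩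

theorem aux_two_three {Ω : Type*} [MetricSpace Ω]
    (X : Set Ω) (δ : ℕ) (s : ℝ≥0∞)
    (h2 : ∀ γ : Finset (Ω × ℝ), (∀ p ∈ γ, p.1 ∈ X ∧ 0 < p.2 ∧ ENNReal.ofReal p.2 < s) →
        ∃ γ' ⊆ γ, (∀ y : Ω, (γ'.filter fun p => dist y p.1 < p.2).card ≤ (δ+1)) ∧
          ∀ p ∈ γ, ∃ q ∈ γ', dist p.1 q.1 < q.2) :
    (∀ γ : Finset (Ω × ℝ), (∀ p ∈ γ, p.1 ∈ X ∧ 0 < p.2 ∧ ENNReal.ofReal p.2 < s) →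
        (∀ p ∈ γ, ∀ q ∈ γ, p ≠ q → ¬ dist p.1 q.1 < q.2) →
        ∀ y : Ω, (γ.filter fun p => dist y p.1 < p.2).card ≤ (δ+1)) := by
  intro γ hγ hdisc
  obtain ⟨γ', hsub, hmult, hcov⟩ := h2 γ hγ
  have heq : γ' = γ := by
    refine Finset.Subset.antisymm hsub (fun p hp => ?_)
    obtain ⟨q, hq, hd⟩ := hcov p hp
    have hpq : p = q := by
      by_contra hne
      exact hdisc p hp q (hsub hq) hne hd
    exact hpq ▸ hq
  exact heq ▸ hmult

/-- For a subspace `X` of a metric space `Ω` and a scale `s`, the following are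
equivalent: (1) every finite family of closed balls of radii `< s` with centres
in `X` admits a subfamily of multiplicity `≤ δ + 1` covering all the centres;
(2) the same for families of open balls; (3) every finite disconnected family of
open balls of radii `< s` with centres in `X` has multiplicity `≤ δ + 1`. -/
theorem nagataDimOnLE_open_closed_disconnected_tfae {Ω : Type*} [MetricSpace Ω]
    (X : Set Ω) (δ : ℕ) (s : ℝ≥0∞) :
    [(∀ γ : Finset (Ω × ℝ), (∀ p ∈ γ, p.1 ∈ X ∧ 0 ≤ p.2 ∧ ENNReal.ofReal p.2 < s) →
        ∃ γ' ⊆ γ, ClosedBallMultLE γ' (δ + 1) ∧ ∀ p ∈ γ, ∃ q ∈ γ', dist p.1 q.1 ≤ q.2),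
      (∀ γ : Finset (Ω × ℝ), (∀ p ∈ γ, p.1 ∈ X ∧ 0 < p.2 ∧ ENNReal.ofReal p.2 < s) →
        ∃ γ' ⊆ γ, OpenBallMultLE γ' (δ + 1) ∧ ∀ p ∈ γ, ∃ q ∈ γ', dist p.1 q.1 < q.2),
      (∀ γ : Finset (Ω × ℝ), (∀ p ∈ γ, p.1 ∈ X ∧ 0 < p.2 ∧ ENNReal.ofReal p.2 < s) →
        OpenBallsDisconnected γ → OpenBallMultLE γ (δ + 1))].TFAE := by
  tfae_have 1 → 3 := fun h => aux_one_three X δ s h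
  tfae_have 3 → 1 := fun h => aux_three_one X δ s h
  tfae_have 3 → 2 := fun h => aux_three_two X δ s h
  tfae_have 2 → 3 := fun h => aux_two_three X δ s h
  tfae_finish
end

section
/- If a subspace X of a metric space Ω has Nagata dimension ≤ δ in Ω on scale s, then the closure of X in Ω also has Nagata dimension ≤ δ in Ω on scale s. -/
open Metric ENNReal

/-- A strongly disconnected family (every radius is less than the distance from any other
centre) has multiplicity at most `δ + 1`. -/
lemma ballMultLE_of_disconnected {Ω : Type*} [MetricSpace Ω] {X : Set Ω} {δ : ℕ} {s : ℝ≥0∞}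
    (h : NagataDimOnLE X δ s) (γ : Finset (Ω × ℝ))
    (hγ : ∀ p ∈ γ, p.1 ∈ X ∧ 0 ≤ p.2 ∧ ENNReal.ofReal p.2 < s)
    (hd : ∀ p ∈ γ, ∀ q ∈ γ, p ≠ q → q.2 < dist p.1 q.1) :
    BallMultLE γ (δ + 1) := by
  obtain ⟨γ', hsub, hmult, hcov⟩ := h γ hγ
  have hγγ' : γ = γ' := by
    refine Finset.Subset.antisymm (fun p hp => ?_) hsub
    obtain ⟨q, hq, hle⟩ := hcov p hp
    rcases eq_or_ne p q with rfl | hne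
    · exact hq
    · exact absurd hle (not_le.2 (hd p hp q (hsub hq) hne))
  rw [hγγ']
  exact hmult

/-- Greedy construction of a disconnected covering subfamily. -/
lemma exists_disconnected_subfamily {Ω : Type*} [MetricSpace Ω] :
    ∀ γ : Finset (Ω × ℝ), (∀ p ∈ γ, 0 ≤ p.2) →
    ∃ γ' ⊆ γ, (∀ p ∈ γ', ∀ q ∈ γ', p ≠ q → q.2 < dist p.1 q.1) ∧
      ∀ p ∈ γ, ∃ q ∈ γ', dist p.1 q.1 ≤ q.2 := by
  classical
  intro γ
  induction γ using Finset.strongInduction with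
  | _ γ ih =>
    intro hr
    rcases γ.eq_empty_or_nonempty with rfl | hne
    · exact ⟨∅, Finset.Subset.refl _, by simp, by simp⟩
    obtain ⟨p, hp, hmax⟩ := γ.exists_max_image Prod.snd hne
    have hss : γ.filter (fun q => ¬ dist q.1 p.1 ≤ p.2) ⊂ γ := by
      refine Finset.filter_ssubset.2 ⟨p, hp, ?_⟩
      simp [dist_self, hr p hp]
    obtain ⟨γ₁, hsub₁, hd₁, hcov₁⟩ := ih _ hss
      (fun q hq => hr q (Finset.mem_of_mem_filter _ hq))
    have hγ₁γ₀ : ∀ q ∈ γ₁, q ∈ γ ∧ ¬ dist q.1 p.1 ≤ p.2 := by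
      intro q hq
      exact Finset.mem_filter.1 (hsub₁ hq)
    refine ⟨insert p γ₁, ?_, ?_, ?_⟩
    · exact Finset.insert_subset hp (hsub₁.trans (Finset.filter_subset _ _))
    · intro a ha b hb hne
      rcases Finset.mem_insert.1 ha with rfl | ha₁
      · rcases Finset.mem_insert.1 hb with rfl | hb₁
        · exact absurd rfl hne
        · obtain ⟨hbγ, hbd⟩ := hγ₁γ₀ b hb₁
          calc b.2 ≤ a.2 := hmax b hbγ
          _ < dist b.1 a.1 := not_le.1 hbd
          _ = dist a.1 b.1 := dist_comm _ _
      · rcases Finset.mem_insert.1 hb with rfl | hb₁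
        · exact not_le.1 (hγ₁γ₀ a ha₁).2
        · exact hd₁ a ha₁ b hb₁ hne
    · intro q hq
      by_cases hcase : dist q.1 p.1 ≤ p.2
      · exact ⟨p, Finset.mem_insert_self _ _, hcase⟩
      · obtain ⟨r, hr₁, hr₂⟩ := hcov₁ q (Finset.mem_filter.2 ⟨hq, hcase⟩)
        exact ⟨r, Finset.mem_insert_of_mem hr₁, hr₂⟩

/-- If `X` has Nagata dimension `≤ δ` in `Ω` on scale `s`, then so does the
closure of `X` in `Ω`. -/
theorem nagataDimOnLE_closure {Ω : Type*} [MetricSpace Ω] (X : Set Ω) (δ : ℕ)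
    (s : ℝ≥0∞) (h : NagataDimOnLE X δ s) : NagataDimOnLE (closure X) δ s := by
  intro γ hγ
  obtain ⟨γ', hsub, hd, hcov⟩ := exists_disconnected_subfamily γ (fun p hp => (hγ p hp).2.1)
  refine ⟨γ', hsub, ?_, hcov⟩
  intro y
  set T := γ'.filter (fun p => dist y p.1 ≤ p.2) with hTdef
  have hTγ' : T ⊆ γ' := Finset.filter_subset _ _
  have hTγ : ∀ p ∈ T, p.1 ∈ closure X ∧ 0 ≤ p.2 ∧ ENNReal.ofReal p.2 < s :=
    fun p hp => hγ p (hsub (hTγ' hp))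
  -- choose a small ε > 0
  classical
  set f : Ω × ℝ → ℝ := fun p => if s = ⊤ then 1 else (s.toReal - p.2) / 4 with hfdef
  set g : (Ω × ℝ) × (Ω × ℝ) → ℝ := fun pq => (dist pq.1.1 pq.2.1 - pq.2.2) / 8 with hgdef
  set E : Finset ℝ := insert 1 (T.image f ∪
      (((T ×ˢ T).filter (fun pq => pq.1 ≠ pq.2)).image g)) with hEdef
  have hEne : E.Nonempty := ⟨1, Finset.mem_insert_self _ _⟩
  set ε : ℝ := E.min' hEne with hεdef
  have hεmem : ε ∈ E := Finset.min'_mem _ _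
  have hεpos : 0 < ε := by
    have : ∀ x ∈ E, 0 < x := by
      intro x hx
      rcases Finset.mem_insert.1 hx with rfl | hx
      · norm_num
      rcases Finset.mem_union.1 hx with hx | hx
      · obtain ⟨p, hpT, rfl⟩ := Finset.mem_image.1 hx
        by_cases hs : s = ⊤
        · simp [hfdef, hs]
        · have hlt : p.2 < s.toReal :=
            (ENNReal.ofReal_lt_iff_lt_toReal (hTγ p hpT).2.1 hs).1 (hTγ p hpT).2.2
          simp only [hfdef, hs, if_false]
          linarith
      · obtain ⟨pq, hpq, rfl⟩ := Finset.mem_image.1 hx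
        obtain ⟨hmem, hne⟩ := Finset.mem_filter.1 hpq
        obtain ⟨h1, h2⟩ := Finset.mem_product.1 hmem
        have := hd pq.1 (hTγ' h1) pq.2 (hTγ' h2) hne
        simp only [hgdef]
        linarith
    exact this ε hεmem
  have hεf : ∀ p ∈ T, ε ≤ f p := fun p hp =>
    Finset.min'_le _ _ (Finset.mem_insert_of_mem
      (Finset.mem_union_left _ (Finset.mem_image_of_mem f hp)))
  have hεg : ∀ p ∈ T, ∀ q ∈ T, p ≠ q → ε ≤ (dist p.1 q.1 - q.2) / 8 := by
    intro p hp q hq hne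
    have hmem : (p, q) ∈ (T ×ˢ T).filter (fun pq => pq.1 ≠ pq.2) :=
      Finset.mem_filter.2 ⟨Finset.mem_product.2 ⟨hp, hq⟩, hne⟩
    exact Finset.min'_le _ _ (Finset.mem_insert_of_mem
      (Finset.mem_union_right _ (Finset.mem_image_of_mem g hmem)))
  -- approximating points in X
  set a : Ω × ℝ → Ω := fun p =>
    if hex : ∃ x ∈ X, dist p.1 x < ε then hex.choose else p.1 with hadef
  have ha : ∀ p ∈ T, a p ∈ X ∧ dist p.1 (a p) < ε := by
    intro p hp
    have hex : ∃ x ∈ X, dist p.1 x < ε :=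
      Metric.mem_closure_iff.1 (hTγ p hp).1 ε hεpos
    simp only [hadef, dif_pos hex]
    exact ⟨hex.choose_spec.1, hex.choose_spec.2⟩
  set F : Ω × ℝ → Ω × ℝ := fun p => (a p, p.2 + 2 * ε) with hFdef
  -- key distance estimate
  have key : ∀ p ∈ T, ∀ q ∈ T, p ≠ q → q.2 + 2 * ε < dist (a p) (a q) := by
    intro p hp q hq hne
    have h8 := hεg p hp q hq hne
    have hap := (ha p hp).2
    have haq := (ha q hq).2
    have htri : dist p.1 q.1 ≤ dist p.1 (a p) + dist (a p) (a q) + dist (a q) q.1 :=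
      dist_triangle4 _ _ _ _
    have : dist (a q) q.1 = dist q.1 (a q) := dist_comm _ _
    linarith
  set γ₂ : Finset (Ω × ℝ) := T.image F with hγ₂def
  -- apply the disconnected-family bound to γ₂
  have hmult₂ : BallMultLE γ₂ (δ + 1) := by
    refine ballMultLE_of_disconnected h γ₂ ?_ ?_
    · intro b hb
      obtain ⟨p, hpT, rfl⟩ := Finset.mem_image.1 hb
      refine ⟨(ha p hpT).1, by have := (hTγ p hpT).2.1; simp only [hFdef]; positivity, ?_⟩
      by_cases hs : s = ⊤
      · simp [hs]
      · have hfp := hεf p hpT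
        have hlt : p.2 < s.toReal :=
          (ENNReal.ofReal_lt_iff_lt_toReal (hTγ p hpT).2.1 hs).1 (hTγ p hpT).2.2
        simp only [hfdef, hs, if_false] at hfp
        refine (ENNReal.ofReal_lt_iff_lt_toReal ?_ hs).2 ?_
        · have := (hTγ p hpT).2.1; simp only [hFdef]; positivity
        · simp only [hFdef]; linarith
    · intro b hb c hc hne
      obtain ⟨p, hpT, rfl⟩ := Finset.mem_image.1 hb
      obtain ⟨q, hqT, rfl⟩ := Finset.mem_image.1 hc
      have hpq : p ≠ q := fun hEq => hne (by rw [hEq])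
      exact key p hpT q hqT hpq
  have hFinj : Set.InjOn F ↑T := by
    intro p hp q hq hEq
    by_contra hne
    have := key p hp q hq hne
    have h1 : a p = a q := congrArg Prod.fst hEq
    rw [h1, dist_self] at this
    have hq2 := (hTγ q hq).2.1
    linarith
  have hcard : γ₂.card = T.card := Finset.card_image_of_injOn hFinj
  have hfull : γ₂.filter (fun b => dist y b.1 ≤ b.2) = γ₂ := by
    refine Finset.filter_true_of_mem ?_
    intro b hb
    obtain ⟨p, hpT, rfl⟩ := Finset.mem_image.1 hb
    have hyp : dist y p.1 ≤ p.2 := (Finset.mem_filter.1 hpT).2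
    have hap := (ha p hpT).2
    have : dist y (a p) ≤ dist y p.1 + dist p.1 (a p) := dist_triangle _ _ _
    simp only [hFdef]
    linarith
  have := hmult₂ y
  rw [hfull, hcard] at this
  exact this
end

section
/- If X and Y are subspaces of a metric space Ω with Nagata dimensions ≤ δ₁ and ≤ δ₂ in Ω on scales s₁ and s₂ respectively, then X ∪ Y has Nagata dimension ≤ δ₁ + δ₂ + 1 in Ω on scale min{s₁, s₂} (i.e., every finite family of closed balls of radii < min{s₁,s₂} with centres in X ∪ Y admits a subfamily of multiplicity ≤ δ₁ + δ₂ + 2 covering all the centres). -/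
open Metric ENNReal

/-- If `X` and `Y` have Nagata dimensions `≤ δ₁`, `≤ δ₂` in `Ω` on scales `s₁`,
`s₂`, then `X ∪ Y` has Nagata dimension `≤ δ₁ + δ₂ + 1` in `Ω` on the scale
`min s₁ s₂`. -/
theorem nagataDimOnLE_union {Ω : Type*} [MetricSpace Ω] (X Y : Set Ω)
    (δ₁ δ₂ : ℕ) (s₁ s₂ : ℝ≥0∞) (hX : NagataDimOnLE X δ₁ s₁)
    (hY : NagataDimOnLE Y δ₂ s₂) :
    NagataDimOnLE (X ∪ Y) (δ₁ + δ₂ + 1) (min s₁ s₂) := by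
  classical
  intro γ hγ
  set γX := γ.filter fun p => p.1 ∈ X with hγX
  set γY := γ.filter fun p => p.1 ∉ X with hγY
  obtain ⟨γX', hsubX, hmultX, hcovX⟩ := hX γX (by
    intro p hp
    simp only [hγX, Finset.mem_filter] at hp
    exact ⟨hp.2, (hγ p hp.1).2.1, lt_of_lt_of_le (hγ p hp.1).2.2 (min_le_left _ _)⟩)
  obtain ⟨γY', hsubY, hmultY, hcovY⟩ := hY γY (by
    intro p hp
    simp only [hγY, Finset.mem_filter] at hp
    exact ⟨((hγ p hp.1).1).resolve_left hp.2, (hγ p hp.1).2.1,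
      lt_of_lt_of_le (hγ p hp.1).2.2 (min_le_right _ _)⟩)
  refine ⟨γX' ∪ γY', ?_, ?_, ?_⟩
  · intro p hp
    rcases Finset.mem_union.1 hp with h | h
    · exact (Finset.filter_subset _ _) (hsubX h)
    · exact (Finset.filter_subset _ _) (hsubY h)
  · intro y
    calc ((γX' ∪ γY').filter fun p => dist y p.1 ≤ p.2).card
        ≤ ((γX'.filter fun p => dist y p.1 ≤ p.2) ∪
            (γY'.filter fun p => dist y p.1 ≤ p.2)).card := by
          rw [Finset.filter_union]
      _ ≤ (γX'.filter fun p => dist y p.1 ≤ p.2).card +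
            (γY'.filter fun p => dist y p.1 ≤ p.2).card := Finset.card_union_le _ _
      _ ≤ (δ₁ + 1) + (δ₂ + 1) := add_le_add (hmultX y) (hmultY y)
      _ = δ₁ + δ₂ + 1 + 1 := by ring
  · intro p hp
    by_cases hpX : p.1 ∈ X
    · obtain ⟨q, hq, hd⟩ := hcovX p (Finset.mem_filter.2 ⟨hp, hpX⟩)
      exact ⟨q, Finset.mem_union_left _ hq, hd⟩
    · obtain ⟨q, hq, hd⟩ := hcovY p (Finset.mem_filter.2 ⟨hp, hpX⟩)
      exact ⟨q, Finset.mem_union_right _ hq, hd⟩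
end
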